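/- arXiv:2208.05149 — 10 statements merged into one kernel-verified Lean document; each statement's English description precedes it below -/
import Mathlib

section
/- For every integer N ≥ 1, R(-1,-2N) = 0, and R(-1,0) = 1/2. -/
open Finset

/-- Weighted Bernoulli sum, obtained by evaluating the derivative of the `m`-th Bernoulli
polynomial at `1`. -/
private lemma wsum_bernoulli (m : ℕ) :
    ∑ i ∈ range (m + 1), ((m - i : ℕ) : ℚ) * (m.choose i) * bernoulli i
      = m * bernoulli' (m - 1) := by
  have h := congrArg (Polynomial.eval (1 : ℚ)) (Polynomial.derivative_bernoulli m)
  rw [Polynomial.eval_mul, Polynomial.eval_natCast, Polynomial.bernoulli_eval_one] at h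
  rw [← h, Polynomial.bernoulli, Polynomial.derivative_sum, Polynomial.eval_finset_sum]
  refine Finset.sum_congr rfl fun i hi => ?_
  rw [Polynomial.derivative_monomial, Polynomial.eval_monomial, one_pow, mul_one]
  ring

/-- The key Bernoulli identity: `∑_{j even, 2 ≤ j ≤ 2N} (j-1) C(2N+2, j) B_j = 1`. -/
private lemma filtered_sum (N : ℕ) (hN : 1 ≤ N) :
    ∑ j ∈ (range (2*N+1)).filter (fun j => 1 ≤ j ∧ Even j),
      ((j : ℚ) - 1) * ((2*N+2).choose j) * bernoulli j = 1 := by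
  have hfull : ∑ j ∈ range (2*N+2+1), ((j : ℚ) - 1) * ((2*N+2).choose j) * bernoulli j
      = ((2*N+2 : ℕ) - 1 : ℚ) * bernoulli (2*N+2) := by
    have h1 := wsum_bernoulli (2*N+2)
    have h2 : ∑ j ∈ range (2*N+2+1), (((2*N+2).choose j : ℚ)) * bernoulli j
        = bernoulli (2*N+2) := by
      rw [Finset.sum_range_succ, sum_bernoulli]
      simp
    have h3 : bernoulli' (2*N+2-1) = 0 :=
      bernoulli'_eq_zero_of_odd (Nat.odd_iff.mpr (by omega)) (by omega)
    calc ∑ j ∈ range (2*N+2+1), ((j : ℚ) - 1) * ((2*N+2).choose j) * bernoulli j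
        = ∑ j ∈ range (2*N+2+1), ((((2*N+2 : ℕ) : ℚ) - 1) * (((2*N+2).choose j) * bernoulli j)
            - ((2*N+2 - j : ℕ) : ℚ) * ((2*N+2).choose j) * bernoulli j) := by
          refine Finset.sum_congr rfl fun j hj => ?_
          have hj' : j ≤ 2*N+2 := by
            have := Finset.mem_range.mp hj; omega
          have hcast : ((2*N+2 - j : ℕ) : ℚ) = ((2*N+2 : ℕ) : ℚ) - j := by
            push_cast [hj']; ring
          rw [hcast]; push_cast; ring
      _ = ((2*N+2 : ℕ) - 1 : ℚ) * bernoulli (2*N+2) := by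
          rw [Finset.sum_sub_distrib, ← Finset.mul_sum, h2, h1, h3]
          push_cast; ring
  have hnot : ∑ j ∈ (range (2*N+1)).filter (fun j => ¬(1 ≤ j ∧ Even j)),
      ((j : ℚ) - 1) * ((2*N+2).choose j) * bernoulli j = -1 := by
    rw [Finset.sum_eq_single_of_mem 0 (by simp)]
    · simp
    · intro j hj hj0
      simp only [Finset.mem_filter, Finset.mem_range] at hj
      rcases hj with ⟨hjr, hjp⟩
      have hodd : Odd j := by
        rcases Nat.even_or_odd j with he | ho
        · exact absurd ⟨by omega, he⟩ hjp
        · exact ho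
      rcases eq_or_ne j 1 with rfl | hj1
      · norm_num
      · rw [bernoulli_eq_bernoulli'_of_ne_one hj1,
          bernoulli'_eq_zero_of_odd hodd (by omega), mul_zero]
  have hsplit := Finset.sum_filter_add_sum_filter_not (range (2*N+1))
      (fun j => 1 ≤ j ∧ Even j)
      (fun j => ((j : ℚ) - 1) * ((2*N+2).choose j) * bernoulli j)
  have hstep : ∑ j ∈ range (2*N+2+1), ((j : ℚ) - 1) * ((2*N+2).choose j) * bernoulli j
      = (∑ j ∈ range (2*N+1), ((j : ℚ) - 1) * ((2*N+2).choose j) * bernoulli j)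
        + 0 + ((2*N+2 : ℕ) - 1 : ℚ) * bernoulli (2*N+2) := by
    rw [Finset.sum_range_succ, Finset.sum_range_succ]
    have hb : bernoulli (2*N+1) = 0 := by
      rw [bernoulli_eq_bernoulli'_of_ne_one (by omega),
        bernoulli'_eq_zero_of_odd (Nat.odd_iff.mpr (by omega)) (by omega)]
    rw [hb]
    push_cast [Nat.choose_self]
    ring
  rw [hfull] at hstep
  rw [← hsplit, hnot] at hstep
  linarith

/-- Binomial coefficient and factorial manipulation needed to reindex the sum. -/
private lemma choose_frac (a b : ℕ) (B : ℚ) :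
    ((a+b).choose a : ℚ) * (B / ((b+2 : ℕ) : ℚ))
      = (((b+2 : ℕ) : ℚ) - 1) * ((a+b+2).choose (b+2)) * B
        / (((a+b+1 : ℕ) : ℚ) * ((a+b+2 : ℕ) : ℚ)) := by
  have h1 : (a+b+2) - (b+2) = a := by omega
  rw [Nat.cast_choose ℚ (by omega : a ≤ a+b),
    Nat.cast_choose ℚ (by omega : b+2 ≤ a+b+2), h1,
    show (a+b) - a = b by omega]
  have e1 : (a+b+2).factorial = (a+b+2) * ((a+b+1) * (a+b).factorial) := by
    rw [show a+b+2 = (a+b+1)+1 by omega, Nat.factorial_succ, Nat.factorial_succ]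
  have e2 : (b+2).factorial = (b+2) * ((b+1) * b.factorial) := by
    rw [Nat.factorial_succ, Nat.factorial_succ]
  rw [e1, e2]
  have f1 : ((a+b).factorial : ℚ) ≠ 0 := Nat.cast_ne_zero.mpr (Nat.factorial_ne_zero _)
  have f2 : (a.factorial : ℚ) ≠ 0 := Nat.cast_ne_zero.mpr (Nat.factorial_ne_zero _)
  have f3 : (b.factorial : ℚ) ≠ 0 := Nat.cast_ne_zero.mpr (Nat.factorial_ne_zero _)
  push_cast
  have g1 : (b:ℚ) + 2 ≠ 0 := by positivity
  have g2 : (b:ℚ) + 1 ≠ 0 := by positivity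
  have g3 : (a:ℚ) + b + 1 ≠ 0 := by positivity
  have g4 : (a:ℚ) + b + 2 ≠ 0 := by positivity
  field_simp
  ring

/-- The rational version of the zeta-value sum. -/
private lemma key_sum' (N : ℕ)
    (hfs : ∑ j ∈ (range (2*N+1)).filter (fun j => 1 ≤ j ∧ Even j),
      ((j : ℚ) - 1) * ((2*N+2).choose j) * bernoulli j = 1) :
    ∑ k ∈ (range (2*N+1)).filter (fun k => 1 ≤ k ∧ Even k),
      ((2*N).choose k : ℚ) * (bernoulli (2*N+2-k) / ((2*N+2-k : ℕ) : ℚ))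
      = 1 / (((2*N+1 : ℕ) : ℚ) * ((2*N+2 : ℕ) : ℚ)) := by
  have hmap : ∑ k ∈ (range (2*N+1)).filter (fun k => 1 ≤ k ∧ Even k),
      ((2*N).choose k : ℚ) * (bernoulli (2*N+2-k) / ((2*N+2-k : ℕ) : ℚ))
      = ∑ j ∈ (range (2*N+1)).filter (fun j => 1 ≤ j ∧ Even j),
        (((j : ℕ) : ℚ) - 1) * ((2*N+2).choose j) * bernoulli j
          / (((2*N+1 : ℕ) : ℚ) * ((2*N+2 : ℕ) : ℚ)) := by
    refine Finset.sum_nbij' (fun k => 2*N+2-k) (fun j => 2*N+2-j) ?_ ?_ ?_ ?_ ?_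
    · intro k hk
      simp only [Finset.mem_filter, Finset.mem_range] at hk ⊢
      obtain ⟨hkr, hk1, hke⟩ := hk
      have hk2 : 2 ≤ k := by rcases hke with ⟨t, rfl⟩; omega
      refine ⟨by omega, by omega, ?_⟩
      rw [Nat.even_sub (by omega : k ≤ 2*N+2)]
      simp [hke, Nat.even_add]
    · intro j hj
      simp only [Finset.mem_filter, Finset.mem_range] at hj ⊢
      obtain ⟨hjr, hj1, hje⟩ := hj
      have hj2 : 2 ≤ j := by rcases hje with ⟨t, rfl⟩; omega
      refine ⟨by omega, by omega, ?_⟩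
      rw [Nat.even_sub (by omega : j ≤ 2*N+2)]
      simp [hje, Nat.even_add]
    · intro k hk
      simp only [Finset.mem_filter, Finset.mem_range] at hk
      omega
    · intro j hj
      simp only [Finset.mem_filter, Finset.mem_range] at hj
      omega
    · intro k hk
      simp only [Finset.mem_filter, Finset.mem_range] at hk
      obtain ⟨hkr, hk1, hke⟩ := hk
      have hk2 : 2 ≤ k := by rcases hke with ⟨t, rfl⟩; omega
      have h := choose_frac k (2*N-k) (bernoulli (2*N+2-k))
      rw [show k + (2*N-k) = 2*N by omega, show (2*N-k)+2 = 2*N+2-k by omega,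
        show 2*N+2 = 2*N+2 from rfl] at h
      simpa using h
  rw [hmap, ← Finset.sum_div, hfs]

/-- `R (-m, -n)` from the paper: the residue
`(-1)^n m! n! / (m+n+1)! + ∑_{k even, 1 ≤ k ≤ n} C(n,k) ζ(k-m-n)`. -/
noncomputable def RRes (m n : ℕ) : ℂ :=
  (-1) ^ n * ((m.factorial : ℂ) * n.factorial / (m + n + 1).factorial) +
    ∑ k ∈ (Finset.range (n + 1)).filter (fun k => 1 ≤ k ∧ Even k),
      (n.choose k : ℂ) * riemannZeta ((k : ℂ) - m - n)

private lemma RRes_one_two_mul (N : ℕ) (hN : 1 ≤ N) : RRes 1 (2 * N) = 0 := by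
  have hq := key_sum' N (filtered_sum N hN)
  unfold RRes
  have hzsum : ∑ k ∈ (range (2*N+1)).filter (fun k => 1 ≤ k ∧ Even k),
      ((2*N).choose k : ℂ) * riemannZeta ((k : ℂ) - (1:ℕ) - (2*N : ℕ))
      = ∑ k ∈ (range (2*N+1)).filter (fun k => 1 ≤ k ∧ Even k),
        -((((2*N).choose k : ℚ) * (bernoulli (2*N+2-k) / ((2*N+2-k : ℕ) : ℚ)) : ℚ) : ℂ) := by
    refine Finset.sum_congr rfl fun k hk => ?_
    simp only [Finset.mem_filter, Finset.mem_range] at hk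
    obtain ⟨hkr, hk1, hke⟩ := hk
    have harg : (k : ℂ) - (1:ℕ) - (2*N : ℕ) = -((2*N+1-k : ℕ) : ℂ) := by
      push_cast [Nat.cast_sub (by omega : k ≤ 2*N+1)]
      ring
    have hodd : Odd (2*N+1-k) := by
      rw [Nat.odd_sub (by omega : k ≤ 2*N+1)]
      simp [hke, Nat.odd_iff, Nat.even_iff] at *
    rw [harg, riemannZeta_neg_nat_eq_bernoulli, hodd.neg_one_pow,
      show 2*N+2-k = (2*N+1-k)+1 by omega]
    generalize 2*N+1-k = j
    push_cast
    ring
  rw [hzsum]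
  have hcast : ∑ k ∈ (range (2*N+1)).filter (fun k => 1 ≤ k ∧ Even k),
      -((((2*N).choose k : ℚ) * (bernoulli (2*N+2-k) / ((2*N+2-k : ℕ) : ℚ)) : ℚ) : ℂ)
      = -(((1 / (((2*N+1 : ℕ) : ℚ) * ((2*N+2 : ℕ) : ℚ))) : ℚ) : ℂ) := by
    rw [Finset.sum_neg_distrib]
    congr 1
    exact_mod_cast hq
  rw [hcast]
  have hfac : ((1 + 2*N + 1).factorial : ℂ) = (2*N+2) * ((2*N+1) * ((2*N).factorial : ℂ)) := by
    rw [show 1+2*N+1 = (2*N+1)+1 by omega, Nat.factorial_succ, Nat.factorial_succ]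
    push_cast
    ring
  rw [hfac]
  have hpow : ((-1 : ℂ)) ^ (2*N) = 1 := by
    rw [pow_mul]; norm_num
  rw [hpow]
  have f1 : ((2*N).factorial : ℂ) ≠ 0 := Nat.cast_ne_zero.mpr (Nat.factorial_ne_zero _)
  have g1 : (2*(N:ℂ)+1) ≠ 0 := by
    have : ((2*N+1 : ℕ) : ℂ) ≠ 0 := Nat.cast_ne_zero.mpr (by omega)
    push_cast at this
    convert this using 2
  have g2 : (2*(N:ℂ)+2) ≠ 0 := by
    have : ((2*N+2 : ℕ) : ℂ) ≠ 0 := Nat.cast_ne_zero.mpr (by omega)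
    push_cast at this
    convert this using 2
  push_cast
  field_simp
  ring

/-- For every integer `N ≥ 1`, `R(-1,-2N) = 0`, and `R(-1,0) = 1/2`. -/
theorem RRes_one_even :
    (∀ N : ℕ, 1 ≤ N → RRes 1 (2 * N) = 0) ∧ RRes 1 0 = 1 / 2 := by
  constructor
  · exact fun N hN => RRes_one_two_mul N hN
  · rw [RRes]
    rw [show (Finset.range (0+1)).filter (fun k => 1 ≤ k ∧ Even k) = ∅ by decide]
    simp [Nat.factorial]
end

section
/- For all positive integers m and n with m + n odd, the reciprocity relation (-1)^n · R(-m,-n) + (-1)^m · R(-n,-m) = m!·n!/(m+n+1)! holds. -/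
open Finset Polynomial

private lemma bsum (m : ℕ) : ∀ n : ℕ, ∑ k ∈ range (m+1), ((-1:ℚ)^k * (m.choose k)) / (n+k+1)
    = (n.factorial * m.factorial : ℚ) / (n+m+1).factorial := by
  induction m with
  | zero =>
      intro n
      rw [Finset.sum_range_one]
      have hf : (n.factorial : ℚ) ≠ 0 := by exact_mod_cast Nat.factorial_ne_zero n
      rw [Nat.factorial_succ]
      push_cast
      rw [div_eq_div_iff (by positivity) (by positivity)]
      norm_num
      ring
  | succ m ih =>
      intro n
      have key := ih n
      have key1 := ih (n+1)
      rw [sum_range_succ'] at key ⊢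
      have hsplit : ∀ k ∈ range (m+1), ((-1:ℚ)^(k+1) * (((m+1).choose (k+1) : ℕ) : ℚ)) / ((n:ℚ)+((k+1:ℕ):ℚ)+1)
          = -(((-1:ℚ)^k * ((m.choose k : ℕ) : ℚ)) / ((((n+1):ℕ):ℚ)+(k:ℚ)+1))
            + ((-1:ℚ)^(k+1) * ((m.choose (k+1) : ℕ) : ℚ)) / ((n:ℚ)+((k+1:ℕ):ℚ)+1) := by
        intro k _
        rw [Nat.choose_succ_succ]
        push_cast
        set a := ((m.choose k : ℕ) : ℚ) with ha
        set b := ((m.choose (k+1) : ℕ) : ℚ) with hb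
        have h2 : ((n:ℚ)+((k:ℚ)+1)+1) ≠ 0 := by positivity
        have h3 : ((n:ℚ)+1+(k:ℚ)+1) ≠ 0 := by positivity
        field_simp
        ring
      rw [sum_congr rfl hsplit, sum_add_distrib, sum_neg_distrib, key1]
      have hh : ∑ k ∈ range (m+1), ((-1:ℚ)^(k+1) * ((m.choose (k+1) : ℕ) : ℚ)) / ((n:ℚ)+((k+1:ℕ):ℚ)+1)
          = ∑ k ∈ range m, ((-1:ℚ)^(k+1) * ((m.choose (k+1) : ℕ) : ℚ)) / ((n:ℚ)+((k+1:ℕ):ℚ)+1) := by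
        rw [sum_range_succ, Nat.choose_succ_self]
        norm_num
      rw [hh]
      have hkey : ∑ k ∈ range m, ((-1:ℚ)^(k+1) * ((m.choose (k+1) : ℕ) : ℚ)) / ((n:ℚ)+((k+1:ℕ):ℚ)+1)
          = (n.factorial * m.factorial : ℚ) / ((n+m+1).factorial : ℚ) - (-1:ℚ)^0 * ((m.choose 0 : ℕ):ℚ) / ((n:ℚ)+((0:ℕ):ℚ)+1) := by
        rw [← key]; ring
      rw [hkey]
      -- now pure arithmetic
      have e1 : ((n+1+m+1).factorial : ℚ) = (n+m+2) * (n+m+1).factorial := by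
        have : n+1+m+1 = (n+m+1)+1 := by ring
        rw [this, Nat.factorial_succ]; push_cast; ring
      have e2 : ((n+(m+1)+1).factorial : ℚ) = (n+m+2) * (n+m+1).factorial := by
        have : n+(m+1)+1 = (n+m+1)+1 := by ring
        rw [this, Nat.factorial_succ]; push_cast; ring
      have e3 : (((n+1).factorial) : ℚ) = (n+1) * n.factorial := by
        rw [Nat.factorial_succ]; push_cast; ring
      have e4 : (((m+1).factorial) : ℚ) = (m+1) * m.factorial := by
        rw [Nat.factorial_succ]; push_cast; ring
      rw [e1, e2, e3, e4]
      have h5 : ((n+m+1).factorial : ℚ) ≠ 0 := by exact_mod_cast Nat.factorial_ne_zero _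
      have h6 : ((n:ℚ)+(m:ℚ)+2) ≠ 0 := by positivity
      have h7 : ((n:ℚ)+1) ≠ 0 := by positivity
      field_simp
      simp only [Nat.choose_zero_right, Nat.cast_one]
      ring

noncomputable def Lfun (p : ℚ[X]) : ℚ := p.sum fun k a => a / (k+1)
lemma Lfun_add (p q : ℚ[X]) : Lfun (p + q) = Lfun p + Lfun q :=
  Polynomial.sum_add_index p q _ (fun _ => zero_div _) (fun _ a b => add_div a b _)
lemma Lfun_smul (s : ℚ) (p : ℚ[X]) : Lfun (s • p) = s * Lfun p := by
  have h := Polynomial.sum_smul_index p s (fun k a => a/(k+1)) (fun _ => zero_div _)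
  rw [Lfun, h, Lfun, Polynomial.sum_def, Polynomial.sum_def, Finset.mul_sum]
  exact Finset.sum_congr rfl fun k _ => mul_div_assoc _ _ _
lemma Lfun_zero : Lfun 0 = 0 := by simp [Lfun]
lemma Lfun_sum {α : Type*} (s : Finset α) (f : α → ℚ[X]) :
    Lfun (∑ i ∈ s, f i) = ∑ i ∈ s, Lfun (f i) := by
  classical
  induction s using Finset.induction_on with
  | empty => simp [Lfun_zero]
  | insert _ _ h ih => rw [Finset.sum_insert h, Lfun_add, ih, Finset.sum_insert h]
lemma Lfun_monomial (k : ℕ) (a : ℚ) : Lfun (monomial k a) = a / (k+1) := by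
  rw [Lfun]; exact Polynomial.sum_monomial_index a _ (zero_div _)
lemma Lfun_C_mul (a : ℚ) (p : ℚ[X]) : Lfun (C a * p) = a * Lfun p := by
  rw [← smul_eq_C_mul, Lfun_smul]
lemma Lfun_neg (p : ℚ[X]) : Lfun (-p) = -Lfun p := by simpa using Lfun_smul (-1) p
lemma Lfun_sub (p q : ℚ[X]) : Lfun (p - q) = Lfun p - Lfun q := by
  rw [sub_eq_add_neg, Lfun_add, Lfun_neg, sub_eq_add_neg]
lemma Lfun_X_pow (k : ℕ) : Lfun (X ^ k) = 1 / (k+1) := by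
  rw [← Polynomial.monomial_one_right_eq_X_pow]; exact Lfun_monomial k 1
lemma Lfun_C (a : ℚ) : Lfun (C a) = a := by simpa using Lfun_monomial 0 a


lemma Lfun_bernoulli (p : ℕ) (hp : 1 ≤ p) : Lfun (Polynomial.bernoulli p) = 0 := by
  rw [Polynomial.bernoulli, Lfun_sum]
  have h : ∀ i ∈ range (p+1), Lfun (monomial (p-i) (_root_.bernoulli i * (p.choose i : ℚ)))
      = (((p+1).choose i : ℚ) * _root_.bernoulli i) / (p+1) := by
    intro i hi
    rw [Finset.mem_range, Nat.lt_succ_iff] at hi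
    rw [Lfun_monomial]
    have hnat : (p+1) * p.choose i = (p+1).choose i * (p-i+1) := by
      have h1 : p.choose i = p.choose (p - i) := (Nat.choose_symm hi).symm
      have h2 : (p+1).choose (p-i+1) = (p+1).choose i := by
        have : p - i + 1 = (p+1) - i := by omega
        rw [this, Nat.choose_symm (by omega)]
      rw [h1, ← h2]
      exact Nat.add_one_mul_choose_eq p (p-i)
    have hq : ((p:ℚ) - i + 1) = ((p - i : ℕ) : ℚ) + 1 := by
      push_cast [hi]; ring
    have hcast : ((p:ℚ)+1) * (p.choose i : ℚ) = ((p+1).choose i : ℚ) * (((p-i:ℕ):ℚ)+1) := by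
      exact_mod_cast congrArg (Nat.cast : ℕ → ℚ) hnat
    have d1 : (((p-i:ℕ):ℚ)+1) ≠ 0 := by positivity
    have d2 : ((p:ℚ)+1) ≠ 0 := by positivity
    rw [div_eq_div_iff d1 d2]
    linear_combination _root_.bernoulli i * hcast
  rw [sum_congr rfl h, ← sum_div]
  have : ∑ i ∈ range (p+1), ((p+1).choose i : ℚ) * _root_.bernoulli i = 0 := by
    rw [_root_.sum_bernoulli, if_neg (by omega)]
  rw [this, zero_div]

lemma Lfun_one_sub_pow (k : ℕ) : Lfun ((1 - X : ℚ[X]) ^ k) = 1 / (k+1) := by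
  have hexp : (1 - X : ℚ[X]) ^ k = ∑ j ∈ range (k+1), monomial j ((-1)^j * (k.choose j : ℚ)) := by
    rw [sub_eq_add_neg, add_comm, add_pow]
    refine sum_congr rfl fun j hj => ?_
    rw [← C_mul_X_pow_eq_monomial, neg_pow, one_pow, mul_one]
    simp only [map_mul, map_pow, map_neg, map_one, map_natCast]
    ring
  rw [hexp, Lfun_sum]
  have h := bsum k 0
  simp only [Nat.cast_zero, zero_add] at h
  have h2 : ∀ j ∈ range (k+1), Lfun (monomial j ((-1)^j * (k.choose j : ℚ)))
      = ((-1:ℚ)^j * (k.choose j : ℚ)) / ((0:ℚ)+j+1) := by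
    intro j _; rw [Lfun_monomial]; norm_num
  rw [sum_congr rfl h2]
  have h3 : ∑ j ∈ range (k+1), ((-1:ℚ)^j * (k.choose j : ℚ)) / ((0:ℚ)+j+1)
      = ∑ j ∈ range (k+1), ((-1:ℚ)^j * (k.choose j : ℚ)) / ((j:ℚ)+1) := by
    refine sum_congr rfl fun j _ => ?_; norm_num
  rw [h3]
  have h4 : ∑ j ∈ range (k+1), ((-1:ℚ)^j * (k.choose j : ℚ)) / ((j:ℚ)+1)
      = (Nat.factorial 0 * k.factorial : ℚ) / (k+1).factorial := h
  rw [h4]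
  simp only [Nat.factorial_zero, Nat.cast_one, one_mul, zero_add, Nat.factorial_succ]
  have : (k.factorial : ℚ) ≠ 0 := by exact_mod_cast Nat.factorial_ne_zero k
  push_cast
  field_simp

lemma Lfun_comp_one_sub (p : ℚ[X]) : Lfun (p.comp (1 - X)) = Lfun p := by
  induction p using Polynomial.induction_on' with
  | add p q hp hq => rw [add_comp, Lfun_add, Lfun_add, hp, hq]
  | monomial n a =>
      rw [← C_mul_X_pow_eq_monomial, mul_comp, C_comp, X_pow_comp, Lfun_C_mul,
        Lfun_one_sub_pow, Lfun_C_mul, Lfun_X_pow]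

lemma Lfun_bernoulli_comp_neg (p : ℕ) (hp : 1 ≤ p) :
    Lfun ((Polynomial.bernoulli p).comp (-X)) = (-1)^p := by
  have hid : (Polynomial.bernoulli p).comp (-X)
      = (Polynomial.bernoulli p).comp (1 - X) - C ((p:ℚ) * (-1)^(p-1)) * X^(p-1) := by
    apply Polynomial.funext
    intro x
    rw [eval_comp, eval_sub, eval_comp]
    simp only [eval_neg, eval_X, eval_sub, eval_one, eval_mul, eval_C, eval_pow]
    have hb := Polynomial.bernoulli_eval_one_add p (-x)
    have h1 : (1:ℚ) + -x = 1 - x := by ring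
    rw [h1] at hb
    rw [hb]
    rw [neg_pow]
    ring
  rw [hid, Lfun_sub, Lfun_comp_one_sub, Lfun_bernoulli p hp, Lfun_C_mul, Lfun_X_pow]
  have hc : (((p-1:ℕ):ℚ)+1) = (p:ℚ) := by
    have : p - 1 + 1 = p := by omega
    exact_mod_cast congrArg (Nat.cast : ℕ → ℚ) this
  rw [hc]
  have hpne : (p:ℚ) ≠ 0 := by positivity
  have hpow : ((-1:ℚ))^p = -(-1:ℚ)^(p-1) := by
    have : p = (p-1) + 1 := by omega
    conv_lhs => rw [this]
    rw [pow_succ]; ring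
  rw [hpow]
  field_simp
  ring

lemma const_of_periodic (p : ℚ[X]) (h : ∀ x : ℚ, p.eval (1+x) = p.eval x) :
    p = C (p.eval 0) := by
  by_contra hne
  have hq : p - C (p.eval 0) ≠ 0 := sub_ne_zero.mpr hne
  have hroots : ∀ j : ℕ, (p - C (p.eval 0)).IsRoot (j : ℚ) := by
    intro j
    have hj : ∀ j : ℕ, p.eval (j : ℚ) = p.eval 0 := by
      intro j
      induction j with
      | zero => norm_num
      | succ j ih => push_cast; rw [add_comm, h (j:ℚ), ih]
    simp [IsRoot, hj j]
  have hinf : {x : ℚ | (p - C (p.eval 0)).IsRoot x}.Infinite := by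
    apply Set.Infinite.mono (s := Set.range (Nat.cast : ℕ → ℚ))
    · rintro _ ⟨j, rfl⟩; exact hroots j
    · exact Set.infinite_range_of_injective Nat.cast_injective
  exact hq (Polynomial.eq_zero_of_infinite_isRoot _ hinf)

private lemma sum_comp_helper {α : Type*} (s : Finset α) (f : α → ℚ[X]) (q : ℚ[X]) :
    (∑ i ∈ s, f i).comp q = ∑ i ∈ s, (f i).comp q := by
  classical
  induction s using Finset.induction_on with
  | empty => simp
  | insert _ _ h ih => rw [Finset.sum_insert h, add_comp, ih, Finset.sum_insert h]

lemma carlitz (m n : ℕ) (hm : 1 ≤ m) (hn : 1 ≤ n) (hodd : Odd (m+n)) :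
    (∑ k ∈ range (n+1), ((n.choose k : ℚ)/(((m+k+1:ℕ)):ℚ)) * _root_.bernoulli (m+k+1))
      - (∑ k ∈ range (m+1), ((m.choose k : ℚ)/(((n+k+1:ℕ)):ℚ)) * _root_.bernoulli (n+k+1))
      = (-1)^n * ((m.factorial : ℚ) * n.factorial / ((m+n+1).factorial : ℚ)) := by
  set P1 : ℚ[X] := ∑ k ∈ range (n+1),
    C ((n.choose k : ℚ)/(((m+k+1:ℕ)):ℚ)) * Polynomial.bernoulli (m+k+1) with hP1
  set P2 : ℚ[X] := ∑ k ∈ range (m+1),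
    C ((m.choose k : ℚ)/(((n+k+1:ℕ)):ℚ)) * Polynomial.bernoulli (n+k+1) with hP2
  -- difference equations
  have hev : ∀ (a b : ℕ) (x : ℚ), (∑ k ∈ range (b+1),
      C ((b.choose k : ℚ)/(((a+k+1:ℕ)):ℚ)) * Polynomial.bernoulli (a+k+1)).eval (1+x)
      - (∑ k ∈ range (b+1),
      C ((b.choose k : ℚ)/(((a+k+1:ℕ)):ℚ)) * Polynomial.bernoulli (a+k+1)).eval x
      = x^a * (1+x)^b := by
    intro a b x
    rw [eval_finset_sum, eval_finset_sum, ← sum_sub_distrib]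
    have hterm : ∀ k ∈ range (b+1),
        (C ((b.choose k : ℚ)/(((a+k+1:ℕ)):ℚ)) * Polynomial.bernoulli (a+k+1)).eval (1+x)
        - (C ((b.choose k : ℚ)/(((a+k+1:ℕ)):ℚ)) * Polynomial.bernoulli (a+k+1)).eval x
        = (b.choose k : ℚ) * x^(a+k) := by
      intro k _
      rw [eval_mul, eval_mul, eval_C, Polynomial.bernoulli_eval_one_add]
      have hd : (((a+k+1:ℕ)):ℚ) ≠ 0 := by positivity
      have hind : (a+k+1) - 1 = a+k := by omega
      rw [hind]
      push_cast
      simp only [eval_C]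
      field_simp
      ring
    rw [sum_congr rfl hterm]
    have hbin : (1+x)^b = ∑ k ∈ range (b+1), (b.choose k : ℚ) * x^k := by
      rw [add_comm 1 x, add_pow]
      refine sum_congr rfl fun k _ => ?_
      rw [one_pow, mul_one]
      ring
    rw [hbin, Finset.mul_sum]
    refine sum_congr rfl fun k _ => ?_
    rw [pow_add]
    ring
  -- periodicity of D
  set D : ℚ[X] := P1 - P2.comp (-X) with hD
  have hDev : ∀ y : ℚ, D.eval y = P1.eval y - P2.eval (-y) := by
    intro y
    rw [hD, eval_sub, eval_comp, eval_neg, eval_X]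
  have hper : ∀ x : ℚ, D.eval (1+x) = D.eval x := by
    intro x
    rw [hDev, hDev]
    have h1 := hev m n x
    rw [← hP1] at h1
    have h2 := hev n m (-1-x)
    rw [← hP2] at h2
    have e1 : (1:ℚ) + (-1-x) = -x := by ring
    have e2 : -(1+x) = (-1:ℚ)-x := by ring
    rw [e1] at h2
    have hsign : ((-1:ℚ)-x)^n * (-x)^m = -(x^m * (1+x)^n) := by
      have e3 : ((-1:ℚ)-x) = -(1+x) := by ring
      rw [e3, neg_pow, neg_pow (x:ℚ)]
      have h5 : (-1:ℚ)^m * (-1)^n = -1 := by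
        rw [← pow_add, Odd.neg_one_pow hodd]
      linear_combination ((1+x)^n * x^m) * h5
    rw [hsign] at h2
    rw [e2]
    linear_combination h1 + h2
  have hconst : D = C (D.eval 0) := const_of_periodic D hper
  have hLC : Lfun D = D.eval 0 := by
    conv_lhs => rw [hconst]
    rw [Lfun_C]
  have hLP1 : Lfun P1 = 0 := by
    rw [hP1, Lfun_sum]
    refine Finset.sum_eq_zero fun k _ => ?_
    rw [Lfun_C_mul, Lfun_bernoulli _ (by omega), mul_zero]
  have hLP2 : Lfun (P2.comp (-X))
      = (-1:ℚ)^(n+1) * ((n.factorial : ℚ) * m.factorial / ((n+m+1).factorial : ℚ)) := by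
    rw [hP2, sum_comp_helper]
    have hterm : ∀ k ∈ range (m+1),
        Lfun ((C ((m.choose k : ℚ)/(((n+k+1:ℕ)):ℚ)) * Polynomial.bernoulli (n+k+1)).comp (-X))
        = (-1:ℚ)^(n+1) * (((-1:ℚ)^k * (m.choose k : ℚ)) / ((n:ℚ)+(k:ℚ)+1)) := by
      intro k _
      rw [mul_comp, C_comp, Lfun_C_mul, Lfun_bernoulli_comp_neg _ (by omega)]
      push_cast
      ring
    rw [Lfun_sum, sum_congr rfl hterm, ← Finset.mul_sum]
    have hb := bsum m n
    rw [hb]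
  have hval : P1.eval 0 - P2.eval 0
      = (-1:ℚ)^n * ((m.factorial : ℚ) * n.factorial / ((m+n+1).factorial : ℚ)) := by
    have h0 : D.eval 0 = P1.eval 0 - P2.eval 0 := by
      have := hDev 0
      rwa [neg_zero] at this
    have hsum : D.eval 0 = Lfun P1 - Lfun (P2.comp (-X)) := by
      rw [← hLC, hD, Lfun_sub]
    rw [hsum, hLP1, hLP2, zero_sub] at h0
    rw [← h0]
    have hcomm : n + m + 1 = m + n + 1 := by omega
    rw [hcomm, pow_succ]
    ring
  rw [← hval, hP1, hP2, eval_finset_sum, eval_finset_sum]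
  congr 1 <;> refine sum_congr rfl fun k _ => ?_ <;>
    rw [eval_mul, eval_C, Polynomial.bernoulli_eval_zero]

lemma zeta_sum_eq (m n : ℕ) (hm : 1 ≤ m) (hn : 1 ≤ n) (hodd : Odd (m+n)) :
    ∑ k ∈ (Finset.range (n + 1)).filter (fun k => 1 ≤ k ∧ Even k),
      (n.choose k : ℂ) * riemannZeta ((k : ℂ) - m - n)
    = -(∑ k ∈ range (n+1), (n.choose k : ℂ) * ((_root_.bernoulli (m+k+1) : ℚ) : ℂ) / (((m+k+1:ℕ)):ℂ))
      + ((_root_.bernoulli (m+n+1) : ℚ) : ℂ) / (((m+n+1:ℕ)):ℂ) := by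
  set f : ℕ → ℂ := fun k =>
    (n.choose k : ℂ) * ((_root_.bernoulli (m+n-k+1) : ℚ) : ℂ) / (((m+n-k+1:ℕ)):ℂ) with hf
  have hstep1 : ∑ k ∈ (Finset.range (n + 1)).filter (fun k => 1 ≤ k ∧ Even k),
      (n.choose k : ℂ) * riemannZeta ((k : ℂ) - m - n)
      = -∑ k ∈ (Finset.range (n + 1)).filter (fun k => 1 ≤ k ∧ Even k), f k := by
    rw [← sum_neg_distrib]
    refine sum_congr rfl fun k hk => ?_
    rw [Finset.mem_filter, Finset.mem_range] at hk
    obtain ⟨hkr, _, hke⟩ := hk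
    have hkn : k ≤ n := by omega
    have harg : (k : ℂ) - m - n = -(((m+n-k : ℕ)):ℂ) := by
      push_cast [Nat.cast_sub (by omega : k ≤ m + n)]
      ring
    rw [harg, riemannZeta_neg_nat_eq_bernoulli]
    have hoddsub : Odd (m+n-k) := Nat.Odd.sub_even (by omega) hodd hke
    rw [Odd.neg_one_pow hoddsub]
    have hc : ((m+n-k+1:ℕ):ℂ) = ((m+n-k:ℕ):ℂ) + 1 := by push_cast; ring
    simp only [hf]
    rw [hc]
    ring
  rw [hstep1]
  have hstep2 : ∑ k ∈ (Finset.range (n + 1)).filter (fun k => 1 ≤ k ∧ Even k), f k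
      = ∑ k ∈ (Finset.range (n + 1)).filter (fun k => 1 ≤ k), f k := by
    apply Finset.sum_subset
    · intro k hk
      rw [Finset.mem_filter] at hk ⊢
      exact ⟨hk.1, hk.2.1⟩
    · intro k hk1 hk2
      rw [Finset.mem_filter] at hk1 hk2
      have hk1le : 1 ≤ k := hk1.2
      have hkodd : Odd k := by
        rcases Nat.even_or_odd k with he | ho
        · exact absurd ⟨hk1.1, hk1le, he⟩ hk2
        · exact ho
      have hkn : k ≤ n := by
        have := hk1.1; rw [Finset.mem_range] at this; omega
      have hbodd : Odd (m+n-k+1) := by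
        have : Even (m+n-k) := Nat.Odd.sub_odd hodd hkodd
        exact this.add_one
      have hb1 : m+n-k+1 ≠ 1 := by omega
      have hbz : _root_.bernoulli (m+n-k+1) = 0 := by
        rw [bernoulli_eq_bernoulli'_of_ne_one hb1]
        exact bernoulli'_eq_zero_of_odd hbodd (by omega)
      rw [hf]
      simp [hbz]
  rw [hstep2]
  have hstep3 : ∑ k ∈ (Finset.range (n + 1)).filter (fun k => 1 ≤ k), f k
      = (∑ k ∈ range (n+1), f k) - f 0 := by
    have hsplit := Finset.sum_filter_add_sum_filter_not (range (n+1)) (fun k => 1 ≤ k) f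
    have h0 : (range (n+1)).filter (fun k => ¬ 1 ≤ k) = {0} := by
      ext k
      simp only [Finset.mem_filter, Finset.mem_range, Finset.mem_singleton]
      omega
    rw [h0, Finset.sum_singleton] at hsplit
    linear_combination hsplit
  rw [hstep3]
  have hrefl : ∑ k ∈ range (n+1), f k
      = ∑ k ∈ range (n+1), (n.choose k : ℂ) * ((_root_.bernoulli (m+k+1) : ℚ) : ℂ) / (((m+k+1:ℕ)):ℂ) := by
    have h := Finset.sum_range_reflect f (n+1)
    simp only [Nat.add_sub_cancel] at h
    rw [← h]
    refine sum_congr rfl fun j hj => ?_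
    rw [Finset.mem_range] at hj
    have hjn : j ≤ n := by omega
    simp only [hf]
    rw [Nat.choose_symm hjn]
    have he : m + n - (n - j) + 1 = m + j + 1 := by omega
    rw [he]
  rw [hrefl]
  have hf0 : f 0 = ((_root_.bernoulli (m+n+1) : ℚ) : ℂ) / (((m+n+1:ℕ)):ℂ) := by
    simp only [hf, Nat.choose_zero_right, Nat.sub_zero, Nat.cast_one, one_mul]
  rw [hf0]
  ring



/-- Reciprocity relation for the residues `R(-m,-n)`:
for `m, n ≥ 1` with `m + n` odd,
`(-1)^n R(-m,-n) + (-1)^m R(-n,-m) = m! n! / (m+n+1)!`. -/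
theorem RRes_reciprocity (m n : ℕ) (hm : 1 ≤ m) (hn : 1 ≤ n) (hodd : Odd (m + n)) :
    (-1 : ℂ) ^ n * RRes m n + (-1 : ℂ) ^ m * RRes n m
      = (m.factorial : ℂ) * n.factorial / (m + n + 1).factorial := by
  have hodd' : Odd (n + m) := by rwa [Nat.add_comm] at hodd
  unfold RRes
  rw [zeta_sum_eq m n hm hn hodd, zeta_sum_eq n m hn hm hodd']
  set U1 : ℂ := ∑ k ∈ Finset.range (n+1),
    (n.choose k : ℂ) * ((_root_.bernoulli (m+k+1) : ℚ) : ℂ) / (((m+k+1:ℕ)):ℂ) with hU1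
  set U2 : ℂ := ∑ k ∈ Finset.range (m+1),
    (m.choose k : ℂ) * ((_root_.bernoulli (n+k+1) : ℚ) : ℂ) / (((n+k+1:ℕ)):ℂ) with hU2
  have key : U1 - U2
      = (-1:ℂ)^n * ((m.factorial : ℂ) * (n.factorial : ℂ) / (((m+n+1).factorial : ℕ) : ℂ)) := by
    have hc := carlitz m n hm hn hodd
    have h1 : U1 = ((∑ k ∈ Finset.range (n+1),
        ((n.choose k : ℚ)/(((m+k+1:ℕ)):ℚ)) * _root_.bernoulli (m+k+1) : ℚ) : ℂ) := by
      rw [hU1, Rat.cast_sum]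
      refine Finset.sum_congr rfl fun k _ => ?_
      push_cast
      ring
    have h2 : U2 = ((∑ k ∈ Finset.range (m+1),
        ((m.choose k : ℚ)/(((n+k+1:ℕ)):ℚ)) * _root_.bernoulli (n+k+1) : ℚ) : ℂ) := by
      rw [hU2, Rat.cast_sum]
      refine Finset.sum_congr rfl fun k _ => ?_
      push_cast
      ring
    rw [h1, h2, ← Rat.cast_sub, hc]
    push_cast
    ring
  have hnm : n + m = m + n := Nat.add_comm n m
  rw [hnm]
  have h3 : (-1:ℂ)^n * (-1)^n = 1 := by
    rw [← pow_add, Even.neg_one_pow ⟨n, rfl⟩]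
  have h2 : (-1:ℂ)^m * (-1)^n = -1 := by
    rw [← pow_add, Odd.neg_one_pow hodd]
  have hb : (-1:ℂ)^m = -(-1)^n := by
    calc (-1:ℂ)^m = (-1)^m * ((-1)^n*(-1)^n) := by rw [h3, mul_one]
    _ = ((-1)^m*(-1)^n)*(-1)^n := by ring
    _ = -(-1)^n := by rw [h2]; ring
  rw [hb]
  linear_combination ((m.factorial : ℂ) * (n.factorial : ℂ) / (((m+n+1).factorial : ℕ) : ℂ)) * h3
    - (-1:ℂ)^n * key
end

section
/- For all positive integers m and n with m + n odd, (-1)^{n-1} · Σ_{j=1}^{n} C(n,j) · (-1)^j · ζ(j−m−n) + (-1)^{m-1} · Σ_{j=1}^{m} C(m,j) · (-1)^j · ζ(j−m−n) = m!·n!/(m+n+1)!. -/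
open Finset Polynomial


lemma beta_sum : ∀ (n m : ℕ), ∑ i ∈ range (n+1), (-1:ℚ)^i * n.choose i / (m+i+1)
    = m.factorial * n.factorial / (m+n+1).factorial := by
  intro n
  induction n with
  | zero =>
    intro m
    have h1 : (m.factorial : ℚ) ≠ 0 := Nat.cast_ne_zero.2 (Nat.factorial_ne_zero _)
    have h3 : ((m:ℚ)+1) ≠ 0 := by positivity
    simp [Nat.factorial_succ]
    field_simp
  | succ n ih =>
    intro m
    have key : ∑ i ∈ range (n+1), (-1:ℚ)^i * n.choose (i+1) / (m+i+2)
        = 1/(m+1) - ∑ i ∈ range (n+1), (-1:ℚ)^i * n.choose i / (m+i+1) := by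
      have h0 : ∑ i ∈ range (n+1), (-1:ℚ)^i * n.choose i / (m+i+1)
          = (∑ i ∈ range n, -((-1:ℚ)^i * n.choose (i+1) / (m+i+2))) + 1/(m+1) := by
        rw [Finset.sum_range_succ']
        congr 1
        · exact Finset.sum_congr rfl fun i _ => by push_cast; ring
        · simp
      have h1 : ∑ i ∈ range (n+1), (-1:ℚ)^i * n.choose (i+1) / (m+i+2)
          = ∑ i ∈ range n, (-1:ℚ)^i * n.choose (i+1) / (m+i+2) := by
        rw [Finset.sum_range_succ, Nat.choose_succ_self]
        simp
      rw [h1, h0, Finset.sum_neg_distrib]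
      ring
    have expand : ∑ i ∈ range (n+2), (-1:ℚ)^i * (n+1).choose i / (m+i+1)
        = (∑ i ∈ range (n+1), (-1:ℚ)^(i+1) * ((n.choose i : ℚ) + n.choose (i+1)) / (m+i+2)) + 1/(m+1) := by
      rw [Finset.sum_range_succ']
      congr 1
      · refine Finset.sum_congr (by ring_nf) fun i _ => ?_
        rw [Nat.choose_succ_succ]
        push_cast; ring
      · simp
    rw [expand]
    have split : ∑ i ∈ range (n+1), (-1:ℚ)^(i+1) * ((n.choose i : ℚ) + n.choose (i+1)) / (m+i+2)
        = -∑ i ∈ range (n+1), (-1:ℚ)^i * n.choose i / (m+i+2)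
          - ∑ i ∈ range (n+1), (-1:ℚ)^i * n.choose (i+1) / (m+i+2) := by
      rw [← Finset.sum_neg_distrib, ← Finset.sum_sub_distrib]
      exact Finset.sum_congr rfl fun i _ => by ring
    have e1 := ih m
    have e2' : ∑ i ∈ range (n+1), (-1:ℚ)^i * n.choose i / (m+i+2)
        = ((m+1).factorial : ℚ) * n.factorial / (m+n+2).factorial := by
      have h := ih (m+1)
      rw [show m+1+n+1 = m+n+2 by ring] at h
      rw [← h]
      exact Finset.sum_congr rfl fun i _ => by push_cast; ring_nf
    rw [split, key, e1, e2']
    have hf1 : ((m+n+2).factorial : ℚ) = (m+n+2) * (m+n+1).factorial := by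
      rw [show m+n+2 = (m+n+1)+1 by ring, Nat.factorial_succ]; push_cast; ring
    have hf2 : ((m+1).factorial : ℚ) = (m+1) * m.factorial := by
      rw [Nat.factorial_succ]; push_cast; ring
    have hf3 : ((n+1).factorial : ℚ) = (n+1) * n.factorial := by
      rw [Nat.factorial_succ]; push_cast; ring
    rw [show m + (n+1) + 1 = m+n+2 by ring, hf1, hf2, hf3]
    have h1 : ((m+n+1).factorial : ℚ) ≠ 0 := Nat.cast_ne_zero.2 (Nat.factorial_ne_zero _)
    have h2 : ((m:ℚ)+n+2) ≠ 0 := by positivity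
    have h3 : ((m:ℚ)+1) ≠ 0 := by positivity
    push_cast
    field_simp
    ring


noncomputable def Lb : Polynomial ℚ →ₗ[ℚ] ℚ :=
  Polynomial.lsum (fun k => (_root_.bernoulli k) • LinearMap.id)

lemma Lb_monomial (k : ℕ) (a : ℚ) : Lb (monomial k a) = _root_.bernoulli k * a := by
  simp [Lb, Polynomial.lsum_apply, Polynomial.sum_monomial_index, mul_comm]

lemma Lb_C (a : ℚ) : Lb (C a) = a := by
  have := Lb_monomial 0 a
  simpa [Polynomial.monomial_zero_left] using this

lemma Lb_C_mul_X_pow (a : ℚ) (k : ℕ) : Lb (C a * X ^ k) = _root_.bernoulli k * a := by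
  rw [Polynomial.C_mul_X_pow_eq_monomial]; exact Lb_monomial k a

lemma neg_pow_bernoulli (k : ℕ) :
    (-1:ℚ)^k * _root_.bernoulli k = _root_.bernoulli k + (if k = 1 then 1 else 0) := by
  rcases Nat.even_or_odd k with he | ho
  · rw [he.neg_one_pow, one_mul, if_neg (by rintro rfl; simp at he), add_zero]
  · rcases eq_or_ne k 1 with rfl | hk
    · norm_num [_root_.bernoulli_one]
    · have h2 : _root_.bernoulli k = 0 := by
        rw [bernoulli_eq_bernoulli'_of_ne_one hk]
        exact bernoulli'_eq_zero_of_odd ho (lt_of_le_of_ne ho.pos (Ne.symm hk))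
      simp [h2, hk]

lemma sum_bernoulli_succ (k : ℕ) :
    ∑ i ∈ range (k+1), (k.choose i : ℚ) * _root_.bernoulli i
      = _root_.bernoulli k + (if k = 1 then 1 else 0) := by
  rw [Finset.sum_range_succ, _root_.sum_bernoulli, Nat.choose_self]
  push_cast; ring

lemma Lb_comp_add_one (f : Polynomial ℚ) : Lb (f.comp (X + 1)) = Lb f + f.coeff 1 := by
  induction f using Polynomial.induction_on' with
  | add p q hp hq => simp [add_comp, map_add, hp, hq]; ring
  | monomial k a =>
    rw [← Polynomial.C_mul_X_pow_eq_monomial, mul_comp, C_comp, pow_comp, X_comp]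
    rw [add_pow]
    simp only [one_pow, mul_one]
    rw [Finset.mul_sum, map_sum]
    have : ∀ i ∈ range (k+1), Lb (C a * (X ^ i * (k.choose i : ℚ[X])))
        = a * ((k.choose i : ℚ) * _root_.bernoulli i) := by
      intro i _
      have : C a * (X ^ i * (k.choose i : ℚ[X])) = C (a * k.choose i) * X ^ i := by
        push_cast
        ring_nf
        rw [Polynomial.C_mul, Polynomial.C_eq_natCast]
        ring
      rw [this, Lb_C_mul_X_pow]
      ring
    rw [Finset.sum_congr rfl this, ← Finset.mul_sum, sum_bernoulli_succ]
    rw [Lb_C_mul_X_pow, Polynomial.coeff_C_mul, Polynomial.coeff_X_pow]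
    rcases eq_or_ne k 1 with rfl | h
    · norm_num; ring
    · simp [h, Ne.symm h]; ring

lemma Lb_comp_neg (f : Polynomial ℚ) : Lb (f.comp (-X)) = Lb f + f.coeff 1 := by
  induction f using Polynomial.induction_on' with
  | add p q hp hq => simp [add_comp, map_add, hp, hq]; ring
  | monomial k a =>
    rw [← Polynomial.C_mul_X_pow_eq_monomial, mul_comp, C_comp, pow_comp, X_comp]
    have : C a * (-X : ℚ[X]) ^ k = C ((-1)^k * a) * X ^ k := by
      rw [neg_pow]
      rw [Polynomial.C_mul, Polynomial.C_pow]
      simp only [Polynomial.C_neg, Polynomial.C_1]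
      ring
    rw [this, Lb_C_mul_X_pow, Polynomial.C_mul_X_pow_eq_monomial, Lb_monomial,
      Polynomial.coeff_monomial]
    have h := neg_pow_bernoulli k
    split_ifs with hk
    · rw [hk, _root_.bernoulli_one]; norm_num; ring
    · simp only [hk, if_false] at h; rw [add_zero] at h; linear_combination a * h

lemma Lb_comp_neg_one_sub (f : Polynomial ℚ) : Lb (f.comp (-1 - X)) = Lb f := by
  set g := f.comp (-X) with hg
  have h1 : g.comp (-X) = f := by
    rw [hg, comp_assoc]
    simp
  have h2 : g.comp (X + 1) = f.comp (-1 - X) := by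
    rw [hg, comp_assoc]
    congr 1
    simp [neg_comp, X_comp]
    ring
  have e1 := Lb_comp_neg g
  rw [h1] at e1
  have e2 := Lb_comp_add_one g
  rw [h2] at e2
  have e3 := Lb_comp_neg f
  rw [← hg] at e3
  linarith

noncomputable def Hpoly (m n : ℕ) : Polynomial ℚ :=
  ∑ i ∈ range (n+1), C ((n.choose i : ℚ)/(m+i+1)) * X^(m+i+1)

lemma deriv_Hpoly (m n : ℕ) : derivative (Hpoly m n) = X^m * (X+1)^n := by
  unfold Hpoly
  rw [derivative_sum]
  have step : ∀ i ∈ range (n+1), derivative (C ((n.choose i:ℚ)/(m+i+1)) * X^(m+i+1))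
      = C ((n.choose i : ℚ)) * X^(m+i) := by
    intro i _
    rw [derivative_C_mul, derivative_X_pow, ← mul_assoc, ← Polynomial.C_mul]
    have hne : ((m:ℚ) + i + 1) ≠ 0 := by positivity
    rw [show m+i+1-1 = m+i from by omega]
    congr 1
    push_cast
    field_simp
  rw [Finset.sum_congr rfl step, add_pow]
  rw [Finset.mul_sum]
  refine Finset.sum_congr rfl fun i _ => ?_
  rw [one_pow, mul_one, pow_add, Polynomial.C_eq_natCast]
  ring

lemma eval_zero_Hpoly (m n : ℕ) : (Hpoly m n).eval 0 = 0 := by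
  unfold Hpoly
  rw [Polynomial.eval_finset_sum]
  refine Finset.sum_eq_zero fun i _ => ?_
  simp

lemma Hswap (m n : ℕ) (hodd : Odd (m+n)) :
    Hpoly n m = (Hpoly m n).comp (-1 - X) - C ((Hpoly m n).eval (-1)) := by
  have hsign : ((-1:Polynomial ℚ))^m * (-1)^n = -1 := by
    rw [← pow_add]; exact hodd.neg_one_pow
  set R : Polynomial ℚ := (Hpoly m n).comp (-1 - X) - C ((Hpoly m n).eval (-1)) with hR
  have hdR : derivative R = X^n * (X+1)^m := by
    rw [hR, derivative_sub, derivative_C, sub_zero, derivative_comp, deriv_Hpoly]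
    have h2 : derivative ((-1 : Polynomial ℚ) - X) = -1 := by
      simp [derivative_sub]
    rw [h2, mul_comp, pow_comp, pow_comp, X_comp, add_comp, X_comp, one_comp]
    have e1 : ((-1 : Polynomial ℚ) - X) = -(X+1) := by ring
    have e2 : ((-1 : Polynomial ℚ) - X + 1) = -X := by ring
    rw [e2, e1, neg_pow, neg_pow]
    linear_combination (-(X+1)^m * X^n) * hsign
  have hD : derivative (Hpoly n m - R) = 0 := by
    rw [derivative_sub, hdR, deriv_Hpoly, sub_self]
  have hC := Polynomial.eq_C_of_derivative_eq_zero hD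
  have hev : (Hpoly n m - R).eval 0 = 0 := by
    rw [Polynomial.eval_sub, eval_zero_Hpoly, hR]
    rw [Polynomial.eval_sub, Polynomial.eval_comp, Polynomial.eval_C]
    simp
  rw [Polynomial.coeff_zero_eq_eval_zero, hev, map_zero] at hC
  linear_combination hC

noncomputable def S (m n : ℕ) : ℚ :=
  ∑ i ∈ range n, (n.choose i : ℚ) * _root_.bernoulli (m+i+1) / ((m+i+1 : ℕ) : ℚ)

lemma Lb_Hpoly (m n : ℕ) :
    Lb (Hpoly m n) = S m n + _root_.bernoulli (m+n+1) / ((m+n+1 : ℕ) : ℚ) := by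
  unfold Hpoly S
  rw [map_sum, Finset.sum_range_succ, Nat.choose_self]
  congr 1
  · refine Finset.sum_congr rfl fun i _ => ?_
    rw [Lb_C_mul_X_pow]
    push_cast
    ring
  · rw [Lb_C_mul_X_pow]
    push_cast
    ring

lemma eval_neg_one_Hpoly (m n : ℕ) :
    (Hpoly m n).eval (-1) = (-1:ℚ)^(m+1) * (m.factorial * n.factorial / (m+n+1).factorial) := by
  unfold Hpoly
  rw [Polynomial.eval_finset_sum, ← beta_sum n m, Finset.mul_sum]
  refine Finset.sum_congr rfl fun i _ => ?_
  rw [Polynomial.eval_mul, Polynomial.eval_C, Polynomial.eval_pow, Polynomial.eval_X]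
  rw [show m+i+1 = (m+1)+i by omega, pow_add]
  push_cast
  ring

lemma icc_eq (m n : ℕ) :
    ∑ j ∈ Icc 1 n, (n.choose j : ℚ) * _root_.bernoulli (m+n-j+1) / ((m+n-j+1 : ℕ) : ℚ)
      = S m n := by
  rw [show Icc 1 n = Ico 1 (n+1) by rw [Finset.Ico_add_one_right_eq_Icc], Finset.sum_Ico_eq_sum_range]
  rw [show n + 1 - 1 = n from rfl]
  rw [← Finset.sum_range_reflect]
  unfold S
  refine Finset.sum_congr rfl fun i hi => ?_
  rw [Finset.mem_range] at hi
  have h1 : 1 + (n - 1 - i) = n - i := by omega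
  have h2 : m + n - (n - i) + 1 = m + i + 1 := by omega
  have h3 : n.choose (n - i) = n.choose i := Nat.choose_symm (by omega)
  rw [h1, h2, h3]

lemma key_rat (m n : ℕ) (hm : 1 ≤ m) (hn : 1 ≤ n) (hodd : Odd (m + n)) :
    (-1:ℚ)^n * ∑ j ∈ Icc 1 n, (n.choose j : ℚ) * _root_.bernoulli (m+n-j+1) / ((m+n-j+1 : ℕ) : ℚ)
      + (-1:ℚ)^m * ∑ j ∈ Icc 1 m, (m.choose j : ℚ) * _root_.bernoulli (m+n-j+1) / ((m+n-j+1 : ℕ) : ℚ)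
      = m.factorial * n.factorial / (m+n+1).factorial := by
  have icc2 : ∑ j ∈ Icc 1 m, (m.choose j : ℚ) * _root_.bernoulli (m+n-j+1) / ((m+n-j+1 : ℕ) : ℚ)
      = S n m := by
    have := icc_eq n m
    rw [← this]
    refine Finset.sum_congr rfl fun j hj => ?_
    rw [show m+n-j+1 = n+m-j+1 by omega]
  rw [icc_eq m n, icc2]
  have hb : S m n = Lb (Hpoly m n) - _root_.bernoulli (m+n+1) / ((m+n+1 : ℕ) : ℚ) := by
    rw [Lb_Hpoly]; ring
  have hb2 : S n m = Lb (Hpoly n m) - _root_.bernoulli (m+n+1) / ((m+n+1 : ℕ) : ℚ) := by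
    rw [Lb_Hpoly, show n+m+1 = m+n+1 by omega]; ring
  have hLb' : Lb (Hpoly n m) = Lb (Hpoly m n) - (Hpoly m n).eval (-1) := by
    rw [Hswap m n hodd, map_sub, Lb_comp_neg_one_sub, Lb_C]
  have hsign : ((-1:ℚ))^m * (-1)^n = -1 := by
    rw [← pow_add]; exact hodd.neg_one_pow
  have hm2 : ((-1:ℚ))^m * (-1)^m = 1 := by rw [← mul_pow]; norm_num
  have hnm : ((-1:ℚ))^n = -(-1)^m := by
    linear_combination ((-1:ℚ)^m) * hsign - ((-1:ℚ)^n) * hm2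
  have hpm : ((-1:ℚ))^(m+1) = -(-1)^m := by ring
  rw [hb, hb2, hLb', eval_neg_one_Hpoly, hpm, hnm]
  linear_combination ((m.factorial : ℚ) * n.factorial / ((m+n+1).factorial : ℚ)) * hm2

/-- For `m, n ≥ 1` with `m + n` odd,
`(-1)^{n-1} ∑_{j=1}^{n} C(n,j) (-1)^j ζ(j-m-n)
 + (-1)^{m-1} ∑_{j=1}^{m} C(m,j) (-1)^j ζ(j-m-n) = m! n! / (m+n+1)!`. -/
theorem zeta_value_reciprocity (m n : ℕ) (hm : 1 ≤ m) (hn : 1 ≤ n) (hodd : Odd (m + n)) :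
    (-1 : ℂ) ^ (n - 1) *
        ∑ j ∈ Finset.Icc 1 n, (n.choose j : ℂ) * (-1) ^ j * riemannZeta ((j : ℂ) - m - n)
      + (-1 : ℂ) ^ (m - 1) *
        ∑ j ∈ Finset.Icc 1 m, (m.choose j : ℂ) * (-1) ^ j * riemannZeta ((j : ℂ) - m - n)
      = (m.factorial : ℂ) * n.factorial / (m + n + 1).factorial := by
  have hzeta : ∀ j : ℕ, j ≤ m + n →
      (-1:ℂ)^j * riemannZeta ((j:ℂ) - m - n)
        = -((_root_.bernoulli (m+n-j+1) : ℂ) / ((m+n-j+1 : ℕ) : ℂ)) := by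
    intro j hj
    have hz : (j:ℂ) - m - n = -((m+n-j : ℕ):ℂ) := by
      have : ((m+n-j:ℕ):ℂ) = (m:ℂ) + n - j := by
        push_cast [Nat.cast_sub hj]
        ring
      rw [this]; ring
    rw [hz, riemannZeta_neg_nat_eq_bernoulli]
    have hsg : (-1:ℂ)^j * (-1)^(m+n-j) = -1 := by
      rw [← pow_add, show j + (m+n-j) = m+n by omega]
      exact hodd.neg_one_pow
    have hden : ((m+n-j:ℕ):ℂ) + 1 = ((m+n-j+1:ℕ):ℂ) := by push_cast; ring
    rw [← hden]
    set B := (_root_.bernoulli (m+n-j+1) : ℂ) with hB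
    have hre : (-1:ℂ)^j * ((-1:ℂ)^(m+n-j) * B / (((m+n-j:ℕ):ℂ)+1))
        = ((-1:ℂ)^j * (-1)^(m+n-j)) * (B / (((m+n-j:ℕ):ℂ)+1)) := by ring
    rw [hre, hsg]
    ring
  have hsum1 : ∑ j ∈ Finset.Icc 1 n, (n.choose j : ℂ) * (-1) ^ j * riemannZeta ((j : ℂ) - m - n)
      = -∑ j ∈ Finset.Icc 1 n, (n.choose j : ℂ) * ((_root_.bernoulli (m+n-j+1) : ℂ) / ((m+n-j+1 : ℕ) : ℂ)) := by
    rw [← Finset.sum_neg_distrib]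
    refine Finset.sum_congr rfl fun j hj => ?_
    rw [Finset.mem_Icc] at hj
    rw [mul_assoc, hzeta j (by omega)]
    ring
  have hsum2 : ∑ j ∈ Finset.Icc 1 m, (m.choose j : ℂ) * (-1) ^ j * riemannZeta ((j : ℂ) - m - n)
      = -∑ j ∈ Finset.Icc 1 m, (m.choose j : ℂ) * ((_root_.bernoulli (m+n-j+1) : ℂ) / ((m+n-j+1 : ℕ) : ℂ)) := by
    rw [← Finset.sum_neg_distrib]
    refine Finset.sum_congr rfl fun j hj => ?_
    rw [Finset.mem_Icc] at hj
    rw [mul_assoc, hzeta j (by omega)]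
    ring
  rw [hsum1, hsum2]
  have hp1 : (-1:ℂ)^(n-1) * -1 = (-1)^n := by
    rw [show ((-1:ℂ)^(n-1) * -1) = (-1)^(n-1) * (-1)^1 by ring, ← pow_add,
      show n - 1 + 1 = n by omega]
  have hp2 : (-1:ℂ)^(m-1) * -1 = (-1)^m := by
    rw [show ((-1:ℂ)^(m-1) * -1) = (-1)^(m-1) * (-1)^1 by ring, ← pow_add,
      show m - 1 + 1 = m by omega]
  have hkey := congrArg (fun q : ℚ => (q : ℂ)) (key_rat m n hm hn hodd)
  simp only [Rat.cast_add, Rat.cast_mul, Rat.cast_sum, Rat.cast_div, Rat.cast_pow,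
    Rat.cast_neg, Rat.cast_one, Rat.cast_natCast] at hkey
  calc (-1:ℂ)^(n-1) * -∑ j ∈ Finset.Icc 1 n, (n.choose j : ℂ) * ((_root_.bernoulli (m+n-j+1) : ℂ) / ((m+n-j+1 : ℕ) : ℂ))
        + (-1:ℂ)^(m-1) * -∑ j ∈ Finset.Icc 1 m, (m.choose j : ℂ) * ((_root_.bernoulli (m+n-j+1) : ℂ) / ((m+n-j+1 : ℕ) : ℂ))
      = (-1:ℂ)^n * ∑ j ∈ Finset.Icc 1 n, (n.choose j : ℂ) * ((_root_.bernoulli (m+n-j+1) : ℂ) / ((m+n-j+1 : ℕ) : ℂ))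
        + (-1:ℂ)^m * ∑ j ∈ Finset.Icc 1 m, (m.choose j : ℂ) * ((_root_.bernoulli (m+n-j+1) : ℂ) / ((m+n-j+1 : ℕ) : ℂ)) := by
        rw [← hp1, ← hp2]; ring
    _ = (m.factorial : ℂ) * n.factorial / (m + n + 1).factorial := by
        rw [← hkey]
        have e1 : ∑ j ∈ Finset.Icc 1 n, (n.choose j : ℂ) * ((_root_.bernoulli (m+n-j+1) : ℂ) / ((m+n-j+1 : ℕ) : ℂ))
            = ∑ j ∈ Finset.Icc 1 n, (n.choose j : ℂ) * (_root_.bernoulli (m+n-j+1) : ℂ) / ((m+n-j+1 : ℕ) : ℂ) :=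
          Finset.sum_congr rfl fun j _ => by ring
        have e2 : ∑ j ∈ Finset.Icc 1 m, (m.choose j : ℂ) * ((_root_.bernoulli (m+n-j+1) : ℂ) / ((m+n-j+1 : ℕ) : ℂ))
            = ∑ j ∈ Finset.Icc 1 m, (m.choose j : ℂ) * (_root_.bernoulli (m+n-j+1) : ℂ) / ((m+n-j+1 : ℕ) : ℂ) :=
          Finset.sum_congr rfl fun j _ => by ring
        rw [e1, e2]
end

section
/- For every integer N ≥ 1, −B_{2N+2}/(2N+2) + Σ_{h=0}^{N} C(2N,2h) · B_{2h+2}/(2h+2) = (2N)!/(2N+2)! = 1/((2N+1)(2N+2)). -/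
open Finset

private lemma sum_range_even_odd (f : ℕ → ℚ) (n : ℕ) :
    ∑ j ∈ range (2 * n), f j
      = ∑ i ∈ range n, f (2 * i) + ∑ i ∈ range n, f (2 * i + 1) := by
  induction n with
  | zero => simp
  | succ n ih =>
      have h2 : 2 * (n + 1) = (2 * n + 1) + 1 := by ring
      rw [h2, Finset.sum_range_succ, Finset.sum_range_succ, ih,
        Finset.sum_range_succ (fun i => f (2 * i)),
        Finset.sum_range_succ (fun i => f (2 * i + 1))]
      ring

private lemma bstar (n : ℕ) :
    ∑ j ∈ range (n + 1), (n.choose j : ℚ) * bernoulli' (j + 1)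
      = 1 + bernoulli' (n + 1) - bernoulli' n := by
  have hA : ∑ j ∈ range (n + 1), ((n + 1).choose (j + 1) : ℚ) * bernoulli' (j + 1)
      = (n : ℚ) + bernoulli' (n + 1) := by
    have h2 : ∑ k ∈ range (n + 2), ((n + 1).choose k : ℚ) * bernoulli' k
        = (n : ℚ) + 1 + bernoulli' (n + 1) := by
      rw [show n + 2 = n + 1 + 1 from rfl, Finset.sum_range_succ, sum_bernoulli' (n + 1),
        Nat.choose_self]
      push_cast
      ring
    rw [Finset.sum_range_succ' (fun k => ((n + 1).choose k : ℚ) * bernoulli' k) (n + 1)] at h2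
    simp only [bernoulli'_zero, Nat.choose_zero_right, Nat.cast_one, one_mul] at h2
    linarith
  have hB : ∑ j ∈ range (n + 1), (n.choose (j + 1) : ℚ) * bernoulli' (j + 1)
      = (n : ℚ) - 1 + bernoulli' n := by
    have h2 : ∑ k ∈ range (n + 2), (n.choose k : ℚ) * bernoulli' k
        = (n : ℚ) + bernoulli' n := by
      rw [show n + 2 = n + 1 + 1 from rfl, Finset.sum_range_succ, Finset.sum_range_succ,
        sum_bernoulli' n]
      simp [Nat.choose_succ_self]
    rw [Finset.sum_range_succ' (fun k => (n.choose k : ℚ) * bernoulli' k) (n + 1)] at h2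
    simp only [bernoulli'_zero, Nat.choose_zero_right, Nat.cast_one, one_mul] at h2
    linarith
  have key : ∀ j : ℕ, (n.choose j : ℚ) = ((n + 1).choose (j + 1) : ℚ) - (n.choose (j + 1) : ℚ) := by
    intro j
    have h := Nat.choose_succ_succ n j
    push_cast [h]
    ring
  calc ∑ j ∈ range (n + 1), (n.choose j : ℚ) * bernoulli' (j + 1)
      = ∑ j ∈ range (n + 1), (((n + 1).choose (j + 1) : ℚ) * bernoulli' (j + 1)
          - (n.choose (j + 1) : ℚ) * bernoulli' (j + 1)) := by
        refine Finset.sum_congr rfl fun j _ => ?_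
        rw [key j]; ring
    _ = _ := by rw [Finset.sum_sub_distrib, hA, hB]; ring

private lemma oddsum (N : ℕ) (hN : 1 ≤ N) :
    ∑ h ∈ range (N + 1), ((2 * N + 1).choose (2 * h + 1) : ℚ) * bernoulli' (2 * h + 2)
      = 1 / 2 + bernoulli' (2 * N + 2) := by
  have hfull := bstar (2 * N + 1)
  have hodd : bernoulli' (2 * N + 1) = 0 :=
    bernoulli'_eq_zero_of_odd ⟨N, by ring⟩ (by omega)
  rw [hodd] at hfull
  have hsplit := sum_range_even_odd
    (fun j => ((2 * N + 1).choose j : ℚ) * bernoulli' (j + 1)) (N + 1)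
  rw [show 2 * (N + 1) = 2 * N + 1 + 1 from by ring] at hsplit
  have heven : ∑ i ∈ range (N + 1), ((2 * N + 1).choose (2 * i) : ℚ) * bernoulli' (2 * i + 1)
      = 1 / 2 := by
    rw [Finset.sum_range_succ' (fun i => ((2 * N + 1).choose (2 * i) : ℚ) * bernoulli' (2 * i + 1)) N]
    have : ∀ i ∈ range N, ((2 * N + 1).choose (2 * (i + 1)) : ℚ) * bernoulli' (2 * (i + 1) + 1) = 0 := by
      intro i _
      rw [bernoulli'_eq_zero_of_odd ⟨i + 1, by ring⟩ (by omega), mul_zero]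
    rw [Finset.sum_congr rfl this]
    simp [bernoulli'_one]
  have : ∀ i ∈ range (N + 1),
      ((2 * N + 1).choose (2 * i + 1) : ℚ) * bernoulli' (2 * i + 1 + 1)
        = ((2 * N + 1).choose (2 * i + 1) : ℚ) * bernoulli' (2 * i + 2) := by
    intro i _; norm_num
  rw [hsplit, heven, Finset.sum_congr rfl this] at hfull
  linarith

private lemma evensum (N : ℕ) :
    ∑ h ∈ range (N + 1), ((2 * N + 2).choose (2 * h + 2) : ℚ) * bernoulli' (2 * h + 2)
      = (N : ℚ) + bernoulli' (2 * N + 2) := by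
  have hfull := sum_bernoulli' (2 * N + 2)
  have hsplit := sum_range_even_odd (fun k => ((2 * N + 2).choose k : ℚ) * bernoulli' k) (N + 1)
  rw [show 2 * (N + 1) = 2 * N + 2 from by ring] at hsplit
  have hodd : ∑ i ∈ range (N + 1), ((2 * N + 2).choose (2 * i + 1) : ℚ) * bernoulli' (2 * i + 1)
      = (N : ℚ) + 1 := by
    rw [Finset.sum_range_succ' (fun i => ((2 * N + 2).choose (2 * i + 1) : ℚ) * bernoulli' (2 * i + 1)) N]
    have : ∀ i ∈ range N,
        ((2 * N + 2).choose (2 * (i + 1) + 1) : ℚ) * bernoulli' (2 * (i + 1) + 1) = 0 := by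
      intro i _
      rw [bernoulli'_eq_zero_of_odd ⟨i + 1, by ring⟩ (by omega), mul_zero]
    rw [Finset.sum_congr rfl this]
    simp only [Finset.sum_const_zero, zero_add, Nat.mul_zero, Nat.zero_add, zero_add,
      Nat.choose_one_right, bernoulli'_one]
    push_cast
    ring
  have heven : ∑ i ∈ range (N + 1), ((2 * N + 2).choose (2 * i) : ℚ) * bernoulli' (2 * i)
      = (N : ℚ) + 1 := by
    have := hsplit.symm.trans hfull
    rw [hodd] at this
    push_cast at this ⊢
    linarith
  have hshift : ∑ i ∈ range (N + 1), ((2 * N + 2).choose (2 * i) : ℚ) * bernoulli' (2 * i)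
      = 1 + ∑ h ∈ range N, ((2 * N + 2).choose (2 * h + 2) : ℚ) * bernoulli' (2 * h + 2) := by
    rw [Finset.sum_range_succ' (fun i => ((2 * N + 2).choose (2 * i) : ℚ) * bernoulli' (2 * i)) N]
    simp only [Nat.mul_zero, Nat.choose_zero_right, bernoulli'_zero, Nat.cast_one, one_mul,
      mul_one]
    rw [add_comm]
    norm_num [Nat.mul_succ]
  have htop : ((2 * N + 2).choose (2 * N + 2) : ℚ) * bernoulli' (2 * N + 2)
      = bernoulli' (2 * N + 2) := by simp
  rw [Finset.sum_range_succ, htop]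
  have : ∑ h ∈ range N, ((2 * N + 2).choose (2 * h + 2) : ℚ) * bernoulli' (2 * h + 2) = N := by
    have := hshift.symm.trans heven
    linarith
  rw [this]

/-- For every integer `N ≥ 1`,
`-B_{2N+2}/(2N+2) + ∑_{h=0}^{N} C(2N,2h) B_{2h+2}/(2h+2) = (2N)!/(2N+2)! = 1/((2N+1)(2N+2))`
(with the convention `B₁ = 1/2`, i.e. Mathlib's `bernoulli'`). -/
theorem bernoulli_even_sum (N : ℕ) (hN : 1 ≤ N) :
    (-(bernoulli' (2 * N + 2)) / (2 * N + 2)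
        + ∑ h ∈ Finset.range (N + 1),
            ((2 * N).choose (2 * h) : ℚ) * bernoulli' (2 * h + 2) / (2 * h + 2)
      = ((2 * N).factorial : ℚ) / (2 * N + 2).factorial)
    ∧ ((2 * N).factorial : ℚ) / (2 * N + 2).factorial
        = 1 / ((2 * (N : ℚ) + 1) * (2 * N + 2)) := by
  have hfact : ((2 * N + 2).factorial : ℚ)
      = (2 * (N : ℚ) + 2) * (2 * (N : ℚ) + 1) * ((2 * N).factorial : ℚ) := by
    rw [show 2 * N + 2 = (2 * N + 1) + 1 from rfl, Nat.factorial_succ, Nat.factorial_succ]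
    push_cast
    ring
  have hfpos : (0 : ℚ) < ((2 * N).factorial : ℚ) := by
    exact_mod_cast (2 * N).factorial_pos
  have h2 : (((2 * N).factorial : ℚ) / (2 * N + 2).factorial
      = 1 / ((2 * (N : ℚ) + 1) * (2 * N + 2))) := by
    rw [hfact]
    rw [div_eq_div_iff (by positivity) (by positivity)]
    ring
  refine ⟨?_, h2⟩
  rw [h2]
  -- rewrite each summand
  have hsummand : ∀ h ∈ range (N + 1),
      ((2 * N).choose (2 * h) : ℚ) * bernoulli' (2 * h + 2) / (2 * h + 2)
        = ((2 * h + 1 : ℕ) : ℚ) * ((2 * N + 2).choose (2 * h + 2) : ℚ)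
            * bernoulli' (2 * h + 2) / ((2 * (N : ℚ) + 1) * (2 * N + 2)) := by
    intro h _
    have key : ((2 * N + 2).choose (2 * h + 2)) * ((2 * h + 2) * (2 * h + 1))
        = ((2 * N).choose (2 * h)) * ((2 * N + 2) * (2 * N + 1)) := by
      have e1 := Nat.add_one_mul_choose_eq (2 * N) (2 * h)
      have e2 := Nat.add_one_mul_choose_eq (2 * N + 1) (2 * h + 1)
      -- e1 : (2N+1) * C(2N, 2h) = C(2N+1, 2h+1) * (2h+1)
      -- e2 : (2N+2) * C(2N+1, 2h+1) = C(2N+2, 2h+2) * (2h+2)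
      rw [show 2 * N + 1 + 1 = 2 * N + 2 from rfl, show 2 * h + 1 + 1 = 2 * h + 2 from rfl] at e2
      calc ((2 * N + 2).choose (2 * h + 2)) * ((2 * h + 2) * (2 * h + 1))
          = ((2 * N + 2).choose (2 * h + 2) * (2 * h + 2)) * (2 * h + 1) := by ring
        _ = ((2 * N + 2) * (2 * N + 1).choose (2 * h + 1)) * (2 * h + 1) := by rw [e2]
        _ = (2 * N + 2) * ((2 * N + 1).choose (2 * h + 1) * (2 * h + 1)) := by ring
        _ = (2 * N + 2) * ((2 * N + 1) * (2 * N).choose (2 * h)) := by rw [e1]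
        _ = _ := by ring
    have keyQ : (((2 * N + 2).choose (2 * h + 2) : ℚ)) * ((2 * (h : ℚ) + 2) * (2 * h + 1))
        = (((2 * N).choose (2 * h) : ℚ)) * ((2 * (N : ℚ) + 2) * (2 * N + 1)) := by
      exact_mod_cast congrArg (fun x : ℕ => (x : ℚ)) key
    rw [div_eq_div_iff (by positivity) (by positivity)]
    push_cast at keyQ ⊢
    linear_combination (-(bernoulli' (2 * h + 2))) * keyQ
  rw [Finset.sum_congr rfl hsummand]
  have hconst : ∑ h ∈ range (N + 1),
      ((2 * h + 1 : ℕ) : ℚ) * ((2 * N + 2).choose (2 * h + 2) : ℚ)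
        * bernoulli' (2 * h + 2) / ((2 * (N : ℚ) + 1) * (2 * N + 2))
      = (∑ h ∈ range (N + 1), ((2 * h + 1 : ℕ) : ℚ) * ((2 * N + 2).choose (2 * h + 2) : ℚ)
          * bernoulli' (2 * h + 2)) / ((2 * (N : ℚ) + 1) * (2 * N + 2)) := by
    rw [Finset.sum_div]
  rw [hconst]
  -- evaluate the numerator sum
  have hnum : ∑ h ∈ range (N + 1), ((2 * h + 1 : ℕ) : ℚ) * ((2 * N + 2).choose (2 * h + 2) : ℚ)
      * bernoulli' (2 * h + 2) = 1 + (2 * (N : ℚ) + 1) * bernoulli' (2 * N + 2) := by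
    have hsplitterm : ∀ h ∈ range (N + 1),
        ((2 * h + 1 : ℕ) : ℚ) * ((2 * N + 2).choose (2 * h + 2) : ℚ) * bernoulli' (2 * h + 2)
          = (2 * (N : ℚ) + 2) * (((2 * N + 1).choose (2 * h + 1) : ℚ) * bernoulli' (2 * h + 2))
            - ((2 * N + 2).choose (2 * h + 2) : ℚ) * bernoulli' (2 * h + 2) := by
      intro h _
      have e2 := Nat.add_one_mul_choose_eq (2 * N + 1) (2 * h + 1)
      rw [show 2 * N + 1 + 1 = 2 * N + 2 from rfl, show 2 * h + 1 + 1 = 2 * h + 2 from rfl] at e2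
      have e2Q : (2 * (N : ℚ) + 2) * ((2 * N + 1).choose (2 * h + 1) : ℚ)
          = ((2 * N + 2).choose (2 * h + 2) : ℚ) * (2 * (h : ℚ) + 2) := by
        exact_mod_cast congrArg (fun x : ℕ => (x : ℚ)) e2
      push_cast
      linear_combination (-(bernoulli' (2 * h + 2))) * e2Q
    rw [Finset.sum_congr rfl hsplitterm, Finset.sum_sub_distrib, ← Finset.mul_sum,
      oddsum N hN, evensum N]
    ring
  rw [hnum]
  have h1 : (2 * (N : ℚ) + 1) ≠ 0 := by positivity
  have h2' : (2 * (N : ℚ) + 2) ≠ 0 := by positivity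
  field_simp
  ring
end

section
/- For every integer N ≥ 1, Σ_{j=1}^{N−1} C(2N−1,2j) · B_{2N−2j}/(2N−2j) = 1/2 − 1/(2N). -/
open Finset

lemma nat_choose_key (n k : ℕ) (hk : k ≤ n) :
    (n + 1) * n.choose k = (n + 1).choose k * (n + 1 - k) := by
  have h1 : n.choose k = n.choose (n - k) := (Nat.choose_symm hk).symm
  have h2 : (n + 1).choose k = (n + 1).choose (n + 1 - k) :=
    (Nat.choose_symm (le_trans hk (Nat.le_succ n))).symm
  have h3 : n + 1 - k = (n - k) + 1 := by omega
  rw [h1, h2, h3, Nat.add_one_mul_choose_eq]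

lemma even_bernoulli_sum (N : ℕ) (hN : 1 ≤ N) :
    ∑ j ∈ Finset.Icc 1 (N - 1), ((2 * N).choose (2 * j) : ℚ) * bernoulli' (2 * j)
      = (N : ℚ) - 1 := by
  have h := sum_bernoulli' (2 * N)
  rw [← Finset.sum_filter_add_sum_filter_not (Finset.range (2 * N)) (fun k => Even k)] at h
  have hodd : ∑ k ∈ (Finset.range (2 * N)).filter (fun k => ¬ Even k),
      ((2 * N).choose k : ℚ) * bernoulli' k = N := by
    rw [Finset.sum_eq_single 1]
    · simp [bernoulli'_one]; ring
    · intro k hk hne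
      simp only [Finset.mem_filter, Nat.not_even_iff_odd] at hk
      have hk1 : 1 < k := by rcases hk.2 with ⟨m, hm⟩; omega
      rw [bernoulli'_eq_zero_of_odd hk.2 hk1, mul_zero]
    · intro h1
      exfalso
      apply h1
      simp only [Finset.mem_filter, Finset.mem_range]
      exact ⟨by omega, by decide⟩
  have heven : ∑ k ∈ (Finset.range (2 * N)).filter (fun k => Even k),
      ((2 * N).choose k : ℚ) * bernoulli' k
      = ∑ j ∈ Finset.range N, ((2 * N).choose (2 * j) : ℚ) * bernoulli' (2 * j) := by
    apply Finset.sum_nbij' (fun k => k / 2) (fun j => 2 * j)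
    · intro k hk
      simp only [Finset.mem_filter, Finset.mem_range] at hk
      simp only [Finset.mem_range]
      omega
    · intro j hj
      simp only [Finset.mem_range] at hj
      simp only [Finset.mem_filter, Finset.mem_range]
      exact ⟨by omega, ⟨j, by ring⟩⟩
    · intro k hk
      simp only [Finset.mem_filter, Finset.mem_range] at hk
      rcases hk.2 with ⟨m, hm⟩
      omega
    · intro j hj; omega
    · intro k hk
      simp only [Finset.mem_filter, Finset.mem_range] at hk
      rcases hk.2 with ⟨m, hm⟩
      have : 2 * (k / 2) = k := by omega
      rw [this]
  have hsplit : ∑ j ∈ Finset.range N, ((2 * N).choose (2 * j) : ℚ) * bernoulli' (2 * j)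
      = 1 + ∑ j ∈ Finset.Icc 1 (N - 1), ((2 * N).choose (2 * j) : ℚ) * bernoulli' (2 * j) := by
    have hI : Finset.Icc 1 (N - 1)
        = Finset.map ⟨fun i => i + 1, add_left_injective 1⟩ (Finset.range (N - 1)) := by
      ext x
      simp only [Finset.mem_Icc, Finset.mem_map, Finset.mem_range, Function.Embedding.coeFn_mk]
      constructor
      · intro hx; exact ⟨x - 1, by omega, by omega⟩
      · rintro ⟨a, ha, rfl⟩; omega
    rw [show Finset.range N = Finset.range ((N - 1) + 1) from by rw [Nat.sub_add_cancel hN],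
      Finset.sum_range_succ', hI, Finset.sum_map]
    simp only [Function.Embedding.coeFn_mk]
    rw [add_comm]
    norm_num
  rw [heven, hsplit, hodd] at h
  have h2N : ((2 * N : ℕ) : ℚ) = 2 * N := by push_cast; ring
  rw [h2N] at h
  linarith

/-- For every integer `N ≥ 1`,
`∑_{j=1}^{N-1} C(2N-1,2j) B_{2N-2j}/(2N-2j) = 1/2 - 1/(2N)`
(with the convention `B₁ = 1/2`, i.e. Mathlib's `bernoulli'`). -/
theorem bernoulli_odd_binom_sum (N : ℕ) (hN : 1 ≤ N) :
    ∑ j ∈ Finset.Icc 1 (N - 1),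
        ((2 * N - 1).choose (2 * j) : ℚ) * bernoulli' (2 * N - 2 * j) / ((2 * N - 2 * j : ℕ) : ℚ)
      = 1 / 2 - 1 / (2 * (N : ℚ)) := by
  have hN0 : (0 : ℚ) < N := by exact_mod_cast hN
  have step1 : ∀ j ∈ Finset.Icc 1 (N - 1),
      ((2 * N - 1).choose (2 * j) : ℚ) * bernoulli' (2 * N - 2 * j) / ((2 * N - 2 * j : ℕ) : ℚ)
        = ((2 * N).choose (2 * j) : ℚ) * bernoulli' (2 * N - 2 * j) / (2 * N) := by
    intro j hj
    simp only [Finset.mem_Icc] at hj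
    have hkle : 2 * j ≤ 2 * N - 1 := by omega
    have key := nat_choose_key (2 * N - 1) (2 * j) hkle
    have h1 : 2 * N - 1 + 1 = 2 * N := by omega
    rw [h1] at key
    have keyQ : (2 * N : ℚ) * ((2 * N - 1).choose (2 * j) : ℚ)
        = ((2 * N).choose (2 * j) : ℚ) * ((2 * N - 2 * j : ℕ) : ℚ) := by
      exact_mod_cast congrArg (Nat.cast (R := ℚ)) key
    have hpos : ((2 * N - 2 * j : ℕ) : ℚ) ≠ 0 := by
      have : 0 < 2 * N - 2 * j := by omega
      positivity
    have h2N0 : (2 : ℚ) * N ≠ 0 := by positivity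
    rw [div_eq_div_iff hpos h2N0]
    linear_combination bernoulli' (2 * N - 2 * j) * keyQ
  rw [Finset.sum_congr rfl step1]
  have reflect : ∑ j ∈ Finset.Icc 1 (N - 1),
      ((2 * N).choose (2 * j) : ℚ) * bernoulli' (2 * N - 2 * j) / (2 * N)
      = ∑ j ∈ Finset.Icc 1 (N - 1),
        ((2 * N).choose (2 * j) : ℚ) * bernoulli' (2 * j) / (2 * N) := by
    apply Finset.sum_nbij' (fun j => N - j) (fun j => N - j)
    · intro j hj; simp only [Finset.mem_Icc] at *; omega
    · intro j hj; simp only [Finset.mem_Icc] at *; omega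
    · intro j hj; simp only [Finset.mem_Icc] at hj; omega
    · intro j hj; simp only [Finset.mem_Icc] at hj; omega
    · intro j hj
      simp only [Finset.mem_Icc] at hj
      have h1 : 2 * (N - j) = 2 * N - 2 * j := by omega
      have h3 : (2 * N).choose (2 * N - 2 * j) = (2 * N).choose (2 * j) :=
        Nat.choose_symm (by omega : 2 * j ≤ 2 * N)
      rw [h1, h3]
  rw [reflect, ← Finset.sum_div]
  rw [even_bernoulli_sum N hN]
  field_simp
end

section
/- Let α : ℕ → ℂ be an arithmetic function and δ > 0 a real number such that the series Σ_{n≥1} |α(n)| · n^{−σ} converges for every real σ > δ. Define α̃ : ℕ → ℂ by α̃(n) = Σ_{d | n} μ(d) · α(n/d), where μ is the Möbius function. Then for all complex numbers s₁, s₂ with Re s₂ > max(1, δ) and Re(s₁ + s₂) > max(2, 1 + δ), the double series Σ_{m₁≥1} Σ_{m₂≥1} α̃(m₂) / (m₁^{s₁} · (m₁ + m₂)^{s₂}) converges absolutely. -/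
open LSeries


private lemma norm_cpow_real_base {x : ℝ} (hx : 0 < x) (y : ℂ) :
    ‖(x : ℂ) ^ y‖ = x ^ y.re := by
  rw [Complex.norm_cpow_eq_rpow_re_of_pos hx]

/-- Let `α : ℕ → ℂ` and `δ > 0` be such that `∑_{n≥1} |α(n)| n^{-σ}` converges for every
real `σ > δ`. Let `α̃(n) = ∑_{d ∣ n} μ(d) α(n/d)`. Then for all complex `s₁, s₂` with
`Re s₂ > max(1, δ)` and `Re(s₁+s₂) > max(2, 1+δ)`, the double series
`∑_{m₁≥1} ∑_{m₂≥1} α̃(m₂) / (m₁^{s₁} (m₁+m₂)^{s₂})` converges absolutely. -/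
theorem double_series_abs_conv_tilde (α : ℕ → ℂ) (δ : ℝ) (hδ : 0 < δ)
    (hα : ∀ σ : ℝ, δ < σ → Summable (fun n : ℕ => ‖α (n + 1)‖ * ((n : ℝ) + 1) ^ (-σ)))
    (αt : ℕ → ℂ)
    (hαt : ∀ n : ℕ, αt n = ∑ d ∈ n.divisors, ((ArithmeticFunction.moebius d : ℤ) : ℂ) * α (n / d))
    (s₁ s₂ : ℂ) (hs₂ : max 1 δ < s₂.re) (hs₁₂ : max 2 (1 + δ) < (s₁ + s₂).re) :
    Summable (fun p : ℕ × ℕ =>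
      ‖αt (p.2 + 1) / ((((p.1 : ℂ) + 1) ^ s₁) * (((p.1 : ℂ) + 1 + ((p.2 : ℂ) + 1)) ^ s₂))‖) := by
  set a := s₁.re with ha
  set b := s₂.re with hb
  have hab : (s₁ + s₂).re = a + b := by simp [ha, hb, Complex.add_re]
  -- choose σ
  set T : ℝ := max 1 δ with hT
  set B : ℝ := min b (a + b - 1) with hB
  have hTB : T < B := by
    rw [hB, lt_min_iff]
    constructor
    · exact hs₂
    · have : max 2 (1 + δ) < a + b := hab ▸ hs₁₂
      have h2 : (2:ℝ) ≤ max 2 (1 + δ) := le_max_left _ _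
      have h1δ : 1 + δ ≤ max 2 (1 + δ) := le_max_right _ _
      rw [hT, max_lt_iff]
      constructor <;> linarith
  set σ : ℝ := (T + B) / 2 with hσ
  have hTσ : T < σ := by rw [hσ]; linarith
  have hσB : σ < B := by rw [hσ]; linarith
  have hσ1 : 1 < σ := lt_of_le_of_lt (le_max_left 1 δ) hTσ
  have hσδ : δ < σ := lt_of_le_of_lt (le_max_right 1 δ) hTσ
  have hσb : σ < b := lt_of_lt_of_le hσB (min_le_left _ _)
  have hσab : σ < a + b - 1 := lt_of_lt_of_le hσB (min_le_right _ _)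
  have hσ0 : 0 < σ := lt_trans one_pos hσ1
  -- f : norms of α as complex numbers
  set f : ℕ → ℂ := fun n => (‖α n‖ : ℂ) with hf
  have hfs : LSeriesSummable f (σ : ℂ) := by
    apply Summable.of_norm
    apply (summable_nat_add_iff 1).mp
    have := hα σ hσδ
    apply this.congr
    intro n
    rw [norm_term_eq, if_neg (Nat.succ_ne_zero n)]
    rw [hf]
    simp only [Complex.norm_real, norm_norm, Complex.ofReal_re]
    rw [Real.rpow_neg (by positivity), div_eq_mul_inv]
    push_cast
    ring
  have h1s : LSeriesSummable (1 : ℕ → ℂ) (σ : ℂ) := by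
    apply LSeriesSummable_one_iff.mpr
    simpa using hσ1
  have hconv : LSeriesSummable (LSeries.convolution (1 : ℕ → ℂ) f) (σ : ℂ) := h1s.convolution hfs
  -- the bound on ‖αt n‖
  have hαt_bound : ∀ n : ℕ, n ≠ 0 → ‖αt n‖ ≤ ‖(LSeries.convolution (1 : ℕ → ℂ) f) n‖ := by
    intro n hn
    have h1 : ‖αt n‖ ≤ ∑ d ∈ n.divisors, ‖α (n / d)‖ := by
      rw [hαt n]
      refine le_trans (norm_sum_le _ _) ?_
      apply Finset.sum_le_sum
      intro d _
      rw [norm_mul]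
      have : ‖((ArithmeticFunction.moebius d : ℤ) : ℂ)‖ ≤ 1 := by
        rw [Complex.norm_intCast]
        exact_mod_cast ArithmeticFunction.abs_moebius_le_one
      calc ‖((ArithmeticFunction.moebius d : ℤ) : ℂ)‖ * ‖α (n / d)‖
          ≤ 1 * ‖α (n / d)‖ := by
            exact mul_le_mul_of_nonneg_right this (norm_nonneg _)
        _ = ‖α (n / d)‖ := one_mul _
    have h2 : (LSeries.convolution (1 : ℕ → ℂ) f) n = ((∑ d ∈ n.divisors, ‖α (n / d)‖ : ℝ) : ℂ) := by
      simp only [LSeries.convolution_def]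
      rw [Nat.sum_divisorsAntidiagonal (fun d e => (1 : ℕ → ℂ) d * f e)]
      push_cast
      simp [hf]
    rw [h2, Complex.norm_real, Real.norm_eq_abs,
      abs_of_nonneg (Finset.sum_nonneg fun d _ => norm_nonneg _)]
    exact h1
  -- g : the m₂-summand
  set g : ℕ → ℝ := fun m => ‖αt (m + 1)‖ * ((m : ℝ) + 1) ^ (-σ) with hg
  have hgs : Summable g := by
    have h := (summable_norm_iff.mpr hconv).comp_injective (add_left_injective 1)
    apply Summable.of_nonneg_of_le (fun m => by positivity) _ h
    intro m
    simp only [Function.comp_apply]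
    rw [norm_term_eq, if_neg (Nat.succ_ne_zero m)]
    rw [hg]
    simp only [Complex.ofReal_re]
    rw [Real.rpow_neg (by positivity), div_eq_mul_inv]
    push_cast
    gcongr
    exact hαt_bound (m + 1) (Nat.succ_ne_zero m)
  -- f₁ : the m₁-summand
  set c : ℝ := a + b - σ with hc
  have hc1 : 1 < c := by rw [hc]; linarith
  set F : ℕ → ℝ := fun m => ((m : ℝ) + 1) ^ (-c) with hF
  have hFs : Summable F := by
    have h := (Real.summable_one_div_nat_rpow.mpr hc1).comp_injective
      (add_left_injective 1)
    apply h.congr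
    intro m
    simp only [Function.comp_apply, hF]
    rw [Real.rpow_neg (by positivity), one_div]
    push_cast
    ring_nf
  have hprod : Summable (fun p : ℕ × ℕ => F p.1 * g p.2) :=
    hFs.mul_of_nonneg hgs (fun m => by positivity)
      (fun m => by rw [hg]; positivity)
  -- final domination
  apply Summable.of_nonneg_of_le (fun p => norm_nonneg _) _ hprod
  rintro ⟨m₁, m₂⟩
  simp only
  set x : ℝ := (m₁ : ℝ) + 1 with hx
  set y : ℝ := (m₂ : ℝ) + 1 with hy
  have hx0 : 0 < x := by positivity
  have hy0 : 0 < y := by positivity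
  have hxM : x ≤ x + y := by linarith
  have hyM : y ≤ x + y := by linarith
  have hM0 : 0 < x + y := by linarith
  have hcast1 : ((m₁ : ℂ) + 1) = ((x : ℝ) : ℂ) := by rw [hx]; push_cast; ring
  have hcast2 : ((m₁ : ℂ) + 1 + ((m₂ : ℂ) + 1)) = (((x + y : ℝ)) : ℂ) := by
    rw [hx, hy]; push_cast; ring
  rw [norm_div, norm_mul, hcast2, hcast1, norm_cpow_real_base hx0,
    norm_cpow_real_base hM0, ← ha, ← hb]
  -- key inequality: (x+y)^b ≥ x^(b-σ) * y^σ
  have key : x ^ (b - σ) * y ^ σ ≤ (x + y) ^ b := by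
    have h1 : x ^ (b - σ) ≤ (x + y) ^ (b - σ) :=
      Real.rpow_le_rpow hx0.le hxM (by linarith)
    have h2 : y ^ σ ≤ (x + y) ^ σ :=
      Real.rpow_le_rpow hy0.le hyM hσ0.le
    calc x ^ (b - σ) * y ^ σ ≤ (x + y) ^ (b - σ) * (x + y) ^ σ := by
          exact mul_le_mul h1 h2 (Real.rpow_nonneg hy0.le _) (Real.rpow_nonneg hM0.le _)
      _ = (x + y) ^ b := by rw [← Real.rpow_add hM0]; ring_nf
  have hxbpos : 0 < x ^ (b - σ) * y ^ σ := by positivity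
  have step : ‖αt (m₂ + 1)‖ / (x ^ a * (x + y) ^ b)
      ≤ ‖αt (m₂ + 1)‖ / (x ^ a * (x ^ (b - σ) * y ^ σ)) := by
    apply div_le_div_of_nonneg_left (norm_nonneg _) (by positivity)
    apply mul_le_mul_of_nonneg_left key (Real.rpow_nonneg hx0.le _)
  refine le_trans step (le_of_eq ?_)
  simp only [hF, hg]
  rw [← hx, ← hy, Real.rpow_neg hx0.le, Real.rpow_neg hy0.le, hc]
  have : x ^ (a + b - σ) = x ^ a * x ^ (b - σ) := by
    rw [← Real.rpow_add hx0]; ring_nf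
  rw [this]
  field_simp
end

section
/- For all complex numbers s₁, s₂ with Re s₂ > 1 and Re(s₁ + s₂) > 2, the double series Σ_{m₁≥1} Σ_{m₂≥1} Λ(m₂) / (m₁^{s₁} · (m₁ + m₂)^{s₂}) converges absolutely, where Λ is the von Mangoldt function. -/
open ArithmeticFunction Real

lemma vonMangoldt_rpow_summable {b : ℝ} (hb : 1 < b) :
    Summable (fun n : ℕ => Λ (n + 1) / ((n : ℝ) + 1) ^ b) := by
  have h := ArithmeticFunction.LSeriesSummable_vonMangoldt
    (s := (b : ℂ)) (by simpa using hb)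
  rw [LSeriesSummable, ← summable_norm_iff] at h
  have h' := (summable_nat_add_iff 1).mpr h
  refine h'.congr fun n => ?_
  rw [LSeries.norm_term_eq]
  rw [if_neg (Nat.succ_ne_zero n)]
  simp only [Complex.ofReal_re, Complex.norm_real, Real.norm_eq_abs,
    _root_.abs_of_nonneg vonMangoldt_nonneg]
  push_cast
  ring

set_option maxHeartbeats 1000000 in
/-- For all complex `s₁, s₂` with `Re s₂ > 1` and `Re(s₁+s₂) > 2`, the double series
`∑_{m₁≥1} ∑_{m₂≥1} Λ(m₂) / (m₁^{s₁} (m₁+m₂)^{s₂})` converges absolutely,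
where `Λ` is the von Mangoldt function. -/
theorem double_series_abs_conv_vonMangoldt (s₁ s₂ : ℂ)
    (hs₂ : 1 < s₂.re) (hs₁₂ : 2 < (s₁ + s₂).re) :
    Summable (fun p : ℕ × ℕ =>
      ‖((ArithmeticFunction.vonMangoldt (p.2 + 1) : ℝ) : ℂ) /
        ((((p.1 : ℂ) + 1) ^ s₁) * (((p.1 : ℂ) + 1 + ((p.2 : ℂ) + 1)) ^ s₂))‖) := by
  set σ₁ := s₁.re with hσ₁
  set σ₂ := s₂.re with hσ₂def
  have hsum : 2 < σ₁ + σ₂ := by rwa [Complex.add_re] at hs₁₂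
  set b : ℝ := (1 + min σ₂ (σ₁ + σ₂ - 1)) / 2 with hbdef
  have hmin : 1 < min σ₂ (σ₁ + σ₂ - 1) := lt_min hs₂ (by linarith)
  have hb1 : 1 < b := by
    have := hmin; simp only [hbdef]; linarith [lt_min_iff.mp hmin]
  have hbσ₂ : b ≤ σ₂ := by
    have h1 : min σ₂ (σ₁ + σ₂ - 1) ≤ σ₂ := min_le_left _ _
    simp only [hbdef]; linarith
  have hbs : b < σ₁ + σ₂ - 1 := by
    have h2 : min σ₂ (σ₁ + σ₂ - 1) ≤ σ₁ + σ₂ - 1 := min_le_right _ _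
    simp only [hbdef]; linarith
  set a : ℝ := σ₂ - b with hadef
  have ha0 : 0 ≤ a := by simp only [hadef]; linarith
  have haσ : 1 < σ₁ + a := by simp only [hadef]; linarith
  -- summable majorant
  have hf : Summable (fun n : ℕ => (((n : ℝ) + 1) ^ (σ₁ + a))⁻¹) := by
    have h := Real.summable_nat_rpow_inv.mpr haσ
    have h' := (summable_nat_add_iff 1).mpr h
    refine h'.congr fun n => by push_cast; ring_nf
  have hg := vonMangoldt_rpow_summable hb1
  have hFG : Summable (fun p : ℕ × ℕ =>
      (((p.1 : ℝ) + 1) ^ (σ₁ + a))⁻¹ * (Λ (p.2 + 1) / ((p.2 : ℝ) + 1) ^ b)) :=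
    hf.mul_of_nonneg hg (fun n => inv_nonneg.mpr (rpow_nonneg (by positivity) _))
      (fun n => div_nonneg vonMangoldt_nonneg (rpow_nonneg (by positivity) _))
  refine hFG.of_nonneg_of_le (fun p => norm_nonneg _) fun p => ?_
  obtain ⟨m, n⟩ := p
  dsimp only
  have hA : (0 : ℝ) < (m : ℝ) + 1 := by positivity
  have hB : (0 : ℝ) < (n : ℝ) + 1 := by positivity
  have hC : (0 : ℝ) < (m : ℝ) + 1 + ((n : ℝ) + 1) := by positivity
  have e1 : ((m : ℂ) + 1) = (((m : ℝ) + 1 : ℝ) : ℂ) := by push_cast; ring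
  have e2 : ((m : ℂ) + 1 + ((n : ℂ) + 1)) = ((((m : ℝ) + 1 + ((n : ℝ) + 1)) : ℝ) : ℂ) := by
    push_cast; ring
  rw [norm_div, norm_mul, e2, e1, Complex.norm_cpow_eq_rpow_re_of_pos hA,
    Complex.norm_cpow_eq_rpow_re_of_pos hC, Complex.norm_real, Real.norm_eq_abs,
    _root_.abs_of_nonneg vonMangoldt_nonneg]
  -- now pure real inequality
  set A : ℝ := (m : ℝ) + 1
  set B : ℝ := (n : ℝ) + 1
  have hden : A ^ (σ₁ + a) * B ^ b ≤ A ^ σ₁ * (A + B) ^ σ₂ := by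
    have hCa : A ^ a ≤ (A + B) ^ a :=
      rpow_le_rpow hA.le (by linarith) ha0
    have hCb : B ^ b ≤ (A + B) ^ b :=
      rpow_le_rpow hB.le (by linarith) (by linarith)
    calc A ^ (σ₁ + a) * B ^ b = A ^ σ₁ * (A ^ a * B ^ b) := by
          rw [rpow_add hA]; ring
      _ ≤ A ^ σ₁ * ((A + B) ^ a * (A + B) ^ b) := by
          apply mul_le_mul_of_nonneg_left _ (rpow_nonneg hA.le _)
          exact mul_le_mul hCa hCb (rpow_nonneg hB.le _) (rpow_nonneg (by linarith) _)
      _ = A ^ σ₁ * (A + B) ^ σ₂ := by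
          rw [← rpow_add hC, hadef]; ring_nf
  have hpos1 : 0 < A ^ (σ₁ + a) * B ^ b :=
    mul_pos (rpow_pos_of_pos hA _) (rpow_pos_of_pos hB _)
  calc Λ (n + 1) / (A ^ σ₁ * (A + B) ^ σ₂)
      ≤ Λ (n + 1) / (A ^ (σ₁ + a) * B ^ b) :=
        div_le_div_of_nonneg_left vonMangoldt_nonneg hpos1 hden
        |>.trans_eq rfl
    _ = (A ^ (σ₁ + a))⁻¹ * (Λ (n + 1) / B ^ b) := by
        field_simp
end

section
/- Let k ≥ 2 be an even integer and h ≥ 0 an integer. Then lim_{s → −(k+h)} (s + k + h) · Γ'(s + k)/Γ(s) = (−1)^{k−1} · (k+h)!/h!, where the limit is taken over complex s (with s avoiding the poles of the expression); that is, the function Γ'(s+k)/Γ(s) has a simple pole at s = −(k+h) with residue (−1)^{k−1}(k+h)!/h!. -/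
open Filter Topology Complex

noncomputable def G : ℂ → ℂ := fun s => (Complex.Gamma s)⁻¹

lemma G_diff : Differentiable ℂ G := Complex.differentiable_one_div_Gamma

lemma G_rec (s : ℂ) : G s = s * G (s + 1) := by
  rcases eq_or_ne s 0 with rfl | hs
  · simp [G, Complex.Gamma_zero]
  · rw [G, G, Complex.Gamma_add_one s hs, mul_inv, ← mul_assoc, mul_inv_cancel₀ hs, one_mul]

lemma G_neg_nat (n : ℕ) : G (-(n : ℂ)) = 0 := by
  simp [G, Complex.Gamma_neg_nat_eq_zero]

lemma deriv_G_neg_nat (n : ℕ) : deriv G (-(n : ℂ)) = (-1) ^ n * n.factorial := by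
  induction n with
  | zero =>
    have hc : HasDerivAt (fun s : ℂ => G (s + 1)) (deriv G ((0:ℂ) + 1)) 0 := by
      simpa [Function.comp_def] using ((G_diff ((0:ℂ) + 1)).hasDerivAt).comp 0 ((hasDerivAt_id (0:ℂ)).add_const 1)
    have h : HasDerivAt (fun s : ℂ => s * G (s + 1))
        (1 * G (0 + 1) + 0 * deriv G (0 + 1)) 0 :=
      (hasDerivAt_id 0).mul hc
    have h2 : HasDerivAt G (1 * G (0 + 1) + 0 * deriv G (0 + 1)) 0 := by
      have : (fun s : ℂ => s * G (s + 1)) = G := by funext s; rw [← G_rec]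
      rwa [this] at h
    simp [h2.deriv, G, Complex.Gamma_one]
  | succ n ih =>
    set x : ℂ := -((n : ℂ) + 1) with hx
    have hc : HasDerivAt (fun s : ℂ => G (s + 1)) (deriv G (x + 1)) x := by
      simpa [Function.comp_def] using ((G_diff (x + 1)).hasDerivAt).comp x ((hasDerivAt_id x).add_const 1)
    have h : HasDerivAt (fun s : ℂ => s * G (s + 1))
        (1 * G (x + 1) + x * deriv G (x + 1)) x :=
      (hasDerivAt_id x).mul hc
    have h2 : HasDerivAt G (1 * G (x + 1) + x * deriv G (x + 1)) x := by
      have : (fun s : ℂ => s * G (s + 1)) = G := by funext s; rw [← G_rec]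
      rwa [this] at h
    have hx1 : x + 1 = -(n : ℂ) := by rw [hx]; ring
    have : deriv G (-((n : ℂ) + 1)) = 1 * G (-(n:ℂ)) + x * deriv G (-(n:ℂ)) := by
      rw [← hx1]; exact h2.deriv
    rw [show -(((n:ℕ)+1 : ℕ) : ℂ) = -((n:ℂ)+1) by push_cast; ring, this, G_neg_nat, ih]
    rw [Nat.factorial_succ]
    push_cast
    ring

lemma deriv_G_cont : Continuous (deriv G) := by
  have h1 : AnalyticOnNhd ℂ G Set.univ := analyticOnNhd_univ_iff_differentiable.mpr G_diff
  have h2 := h1.deriv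
  exact (analyticOnNhd_univ_iff_differentiable.mp h2).continuous

lemma G_ne_zero {s : ℂ} (hs : ∀ m : ℕ, s ≠ -m) : G s ≠ 0 :=
  inv_ne_zero (Complex.Gamma_ne_zero hs)


lemma tendsto_G_div (n : ℕ) :
    Tendsto (fun s : ℂ => G s / (s + n)) (𝓝[≠] (-(n:ℂ)))
      (𝓝 ((-1) ^ n * n.factorial)) := by
  have hd : HasDerivAt G (deriv G (-(n:ℂ))) (-(n:ℂ)) := (G_diff _).hasDerivAt
  have ht := hasDerivAt_iff_tendsto_slope.mp hd
  rw [deriv_G_neg_nat] at ht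
  refine ht.congr' ?_
  filter_upwards [self_mem_nhdsWithin] with s hs
  simp [slope_def_field, G_neg_nat, sub_neg_eq_add]

lemma tendsto_sq_deriv_Gamma (h : ℕ) :
    Tendsto (fun z : ℂ => (z + h) ^ 2 * deriv Complex.Gamma z) (𝓝[≠] (-(h:ℂ)))
      (𝓝 (-(((-1:ℂ) ^ h * h.factorial)⁻¹))) := by
  set c : ℂ := (-1) ^ h * h.factorial with hc
  have hc0 : c ≠ 0 := by
    apply mul_ne_zero (pow_ne_zero _ (by norm_num))
    exact_mod_cast Nat.cast_ne_zero.mpr h.factorial_ne_zero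
  have hA : Tendsto (fun z : ℂ => deriv G z) (𝓝[≠] (-(h:ℂ))) (𝓝 c) := by
    have h1 : Tendsto (fun z : ℂ => deriv G z) (𝓝[≠] (-(h:ℂ))) (𝓝 (deriv G (-(h:ℂ)))) :=
      (deriv_G_cont.tendsto _).mono_left nhdsWithin_le_nhds
    rwa [deriv_G_neg_nat] at h1
  have hB := tendsto_G_div h
  have htot : Tendsto (fun z : ℂ => -(deriv G z) * ((G z / (z + h))⁻¹) ^ 2)
      (𝓝[≠] (-(h:ℂ))) (𝓝 (-c * (c⁻¹) ^ 2)) :=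
    hA.neg.mul ((hB.inv₀ hc0).pow 2)
  have hval : -c * (c⁻¹) ^ 2 = -c⁻¹ := by field_simp
  rw [hval] at htot
  refine htot.congr' ?_
  have hball : Metric.ball (-(h:ℂ)) (1/2) ∈ 𝓝[≠] (-(h:ℂ)) :=
    mem_nhdsWithin_of_mem_nhds (Metric.ball_mem_nhds _ (by norm_num))
  filter_upwards [self_mem_nhdsWithin, hball] with z hz hzb
  have hznot : ∀ m : ℕ, z ≠ -m := by
    intro m hm
    subst hm
    have hmh : m ≠ h := fun he => hz (by rw [he]; rfl)
    have h1 : dist (-(m:ℂ)) (-(h:ℂ)) < 1/2 := Metric.mem_ball.mp hzb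
    rw [Complex.dist_eq] at h1
    have h2 : -(m:ℂ) - -(h:ℂ) = ((h - m : ℤ) : ℂ) := by push_cast; ring
    rw [h2, Complex.norm_intCast] at h1
    have hne : ((h:ℤ) - m) ≠ 0 := by
      intro he; exact hmh (by omega)
    have h3 : (1:ℝ) ≤ |((h - m : ℤ) : ℝ)| := by exact_mod_cast Int.one_le_abs hne
    linarith
  have hGz : G z ≠ 0 := G_ne_zero hznot
  have hzh : z + h ≠ 0 := by
    intro he
    exact hz (by rw [show z = -(h:ℂ) by linear_combination he]; rfl)
  have hder : deriv Complex.Gamma z = -(deriv G z) / (G z) ^ 2 := by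
    have hG' : HasDerivAt (fun w => (G w)⁻¹) (-(deriv G z) / (G z) ^ 2) z :=
      ((G_diff z).hasDerivAt).inv hGz
    have heq : (fun w => (G w)⁻¹) = Complex.Gamma := by
      funext w; simp [G]
    rw [heq] at hG'
    exact hG'.deriv
  rw [hder]
  field_simp

/-- For even `k ≥ 2` and `h ≥ 0`, the function `Γ'(s+k)/Γ(s)` has a simple pole at
`s = -(k+h)` with residue `(-1)^{k-1} (k+h)!/h!`:
`lim_{s → -(k+h)} (s+k+h) Γ'(s+k)/Γ(s) = (-1)^{k-1} (k+h)!/h!`. -/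
theorem gamma_ratio_residue (k h : ℕ) (hk : 2 ≤ k) (hke : Even k) :
    Tendsto (fun s : ℂ => (s + k + h) * (deriv Complex.Gamma (s + k) / Complex.Gamma s))
      (𝓝[≠] (-((k : ℂ) + h)))
      (𝓝 ((-1 : ℂ) ^ (k - 1) * ((k + h).factorial : ℂ) / (h.factorial : ℂ))) := by
  have hn : -((k:ℂ) + h) = -(((k+h:ℕ)) : ℂ) := by push_cast; ring
  rw [hn]
  have hmap : Tendsto (fun s : ℂ => s + k) (𝓝[≠] (-(((k+h:ℕ)):ℂ))) (𝓝[≠] (-(h:ℂ))) := by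
    apply tendsto_nhdsWithin_of_tendsto_nhds_of_eventually_within
    · have h1 : Tendsto (fun s : ℂ => s + k) (𝓝 (-(((k+h:ℕ)):ℂ))) (𝓝 (-(((k+h:ℕ)):ℂ) + k)) :=
        (continuous_id.add continuous_const).tendsto _
      have h2 : -(((k+h:ℕ)):ℂ) + k = -(h:ℂ) := by push_cast; ring
      rw [h2] at h1
      exact h1.mono_left nhdsWithin_le_nhds
    · filter_upwards [self_mem_nhdsWithin] with s hs
      intro hcon
      apply hs
      simp only [Set.mem_singleton_iff] at hcon ⊢
      push_cast at hcon ⊢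
      linear_combination hcon
  have hA : Tendsto (fun s : ℂ => (s + k + h) ^ 2 * deriv Complex.Gamma (s + k))
      (𝓝[≠] (-(((k+h:ℕ)):ℂ))) (𝓝 (-(((-1:ℂ) ^ h * h.factorial)⁻¹))) :=
    (tendsto_sq_deriv_Gamma h).comp hmap
  have hB := tendsto_G_div (k + h)
  have htot := hA.mul hB
  have hval : -(((-1:ℂ) ^ h * h.factorial)⁻¹) * ((-1) ^ (k+h) * (k+h).factorial) =
      (-1 : ℂ) ^ (k - 1) * ((k + h).factorial : ℂ) / (h.factorial : ℂ) := by
    have hk1 : k - 1 + 1 = k := by omega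
    have hinv : ((-1:ℂ) ^ h)⁻¹ = (-1:ℂ) ^ h := by rw [← inv_pow]; norm_num
    have hsq : (-1:ℂ) ^ h * (-1:ℂ) ^ h = 1 := by
      rw [← pow_add]; exact Even.neg_one_pow ⟨h, rfl⟩
    have hsign : (-1:ℂ) ^ (k + h) = -((-1:ℂ) ^ (k - 1) * (-1:ℂ) ^ h) := by
      rw [pow_add]
      conv_lhs => rw [← hk1]
      rw [pow_succ]; ring
    rw [mul_inv, hinv, hsign, div_eq_mul_inv]
    linear_combination ((-1:ℂ) ^ (k - 1) * ((k+h).factorial : ℂ) *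
      ((h.factorial : ℂ))⁻¹) * hsq
  rw [hval] at htot
  refine htot.congr' ?_
  filter_upwards [self_mem_nhdsWithin] with s hs
  have hs0 : s + k + h ≠ 0 := by
    intro he
    apply hs
    simp only [Set.mem_singleton_iff]
    push_cast
    linear_combination he
  have hcast : s + ((k+h:ℕ):ℂ) = s + k + h := by push_cast; ring
  show (s + k + h) ^ 2 * deriv Complex.Gamma (s + k) * (G s / (s + ((k+h:ℕ):ℂ))) =
    (s + k + h) * (deriv Complex.Gamma (s + k) / Complex.Gamma s)
  rw [hcast, G, div_eq_mul_inv, div_eq_mul_inv]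
  have hcancel : (s + k + h) * (s + k + h)⁻¹ = 1 := mul_inv_cancel₀ hs0
  linear_combination ((s + k + h) * deriv Complex.Gamma (s + k) *
    (Complex.Gamma s)⁻¹) * hcancel
end

section
/- For every integer l ≥ 0, lim_{s → −l} ( Γ(s) − (−1)^l / (l! · (s + l)) ) = ((−1)^l / l!) · ( Σ_{j=1}^{l} 1/j − γ ), where the limit is taken over complex s ≠ −l; that is, the constant term of the Laurent expansion of Γ(s) at s = −l equals ((−1)^l/l!)(H_l − γ). -/
open Filter Topology

private lemma gamma_laurent_aux (l : ℕ) :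
    Tendsto (fun s : ℂ => Complex.Gamma s - ((-1 : ℂ) ^ l / (l.factorial : ℂ)) / (s + l))
      (𝓝[≠] (-(l : ℂ)))
      (𝓝 (((-1 : ℂ) ^ l / (l.factorial : ℂ)) *
        ((∑ j ∈ Finset.Icc 1 l, (1 : ℂ) / j) - (Real.eulerMascheroniConstant : ℂ)))) := by
  induction l with
  | zero =>
      have h := Complex.hasDerivAt_Gamma_one
      rw [hasDerivAt_iff_tendsto_slope] at h
      have hmap : Tendsto (fun s : ℂ => s + 1) (𝓝[≠] 0) (𝓝[≠] 1) := by
        refine tendsto_nhdsWithin_of_tendsto_nhds_of_eventually_within _ ?_ ?_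
        · have : Tendsto (fun s : ℂ => s + 1) (𝓝 0) (𝓝 (0 + 1)) :=
            (continuous_id.add continuous_const).tendsto 0
          simpa using this.mono_left nhdsWithin_le_nhds
        · filter_upwards [self_mem_nhdsWithin] with s hs
          simp only [Set.mem_compl_iff, Set.mem_singleton_iff] at hs ⊢
          exact fun hc => hs (by linear_combination hc)
      have h2 := h.comp hmap
      have h3 : Tendsto (fun s : ℂ => Complex.Gamma s - 1 / s) (𝓝[≠] (0 : ℂ))
          (𝓝 (-(Real.eulerMascheroniConstant : ℂ))) := by
        refine h2.congr' ?_
        filter_upwards [self_mem_nhdsWithin] with s hs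
        simp only [Set.mem_compl_iff, Set.mem_singleton_iff] at hs
        simp only [Function.comp, slope_def_field]
        rw [Complex.Gamma_add_one s hs, Complex.Gamma_one]
        field_simp
        linear_combination (-1 + s * Complex.Gamma s) * (mul_inv_cancel₀ hs)
      simpa using h3
  | succ l ih =>
      set γ : ℂ := (Real.eulerMascheroniConstant : ℂ)
      set c : ℂ := (-1 : ℂ) ^ l / (l.factorial : ℂ) with hc
      have hl1 : ((l : ℂ) + 1) ≠ 0 := by
        exact_mod_cast Nat.cast_add_one_ne_zero (R := ℂ) l
      have hcsucc : (-1 : ℂ) ^ (l + 1) / ((l + 1).factorial : ℂ) = -c / ((l : ℂ) + 1) := by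
        rw [hc, Nat.factorial_succ, pow_succ]
        push_cast
        field_simp
      -- map s ↦ s + 1 from punctured nbhd of -(l+1) to punctured nbhd of -l
      have hmap : Tendsto (fun s : ℂ => s + 1) (𝓝[≠] (-((l : ℂ) + 1))) (𝓝[≠] (-(l : ℂ))) := by
        refine tendsto_nhdsWithin_of_tendsto_nhds_of_eventually_within _ ?_ ?_
        · have : Tendsto (fun s : ℂ => s + 1) (𝓝 (-((l : ℂ) + 1))) (𝓝 (-((l : ℂ) + 1) + 1)) :=
            (continuous_id.add continuous_const).tendsto _
          have e : -((l : ℂ) + 1) + 1 = -(l : ℂ) := by ring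
          rw [e] at this
          exact this.mono_left nhdsWithin_le_nhds
        · filter_upwards [self_mem_nhdsWithin] with s hs
          simp only [Set.mem_compl_iff, Set.mem_singleton_iff] at hs ⊢
          exact fun hcon => hs (by linear_combination hcon)
      have hIH := ih.comp hmap
      -- 1/s → 1/(-(l+1))
      have hinv : Tendsto (fun s : ℂ => 1 / s) (𝓝[≠] (-((l : ℂ) + 1)))
          (𝓝 (1 / (-((l : ℂ) + 1)))) := by
        refine Tendsto.mono_left ?_ nhdsWithin_le_nhds
        exact (continuousAt_const.div continuousAt_id (by simpa using neg_ne_zero.mpr hl1))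
      have hterm2 : Tendsto (fun s : ℂ => c / (((l : ℂ) + 1) * s)) (𝓝[≠] (-((l : ℂ) + 1)))
          (𝓝 (c / (((l : ℂ) + 1) * (-((l : ℂ) + 1))))) := by
        refine Tendsto.mono_left ?_ nhdsWithin_le_nhds
        refine continuousAt_const.div (continuousAt_const.mul continuousAt_id) ?_
        simpa using mul_ne_zero hl1 (neg_ne_zero.mpr hl1)
      have hmain := (hinv.mul hIH).add hterm2
      have key : Tendsto
          (fun s : ℂ => Complex.Gamma s - ((-1 : ℂ) ^ (l+1) / ((l+1).factorial : ℂ)) / (s + (l+1)))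
          (𝓝[≠] (-((l : ℂ) + 1)))
          (𝓝 ((1 / (-((l : ℂ) + 1))) * (c * ((∑ j ∈ Finset.Icc 1 l, (1 : ℂ) / j) - γ))
            + c / (((l : ℂ) + 1) * (-((l : ℂ) + 1))))) := by
        refine hmain.congr' ?_
        have hne0 : ∀ᶠ s : ℂ in 𝓝[≠] (-((l : ℂ) + 1)), s ≠ 0 :=
          (eventually_ne_nhds (neg_ne_zero.mpr hl1)).filter_mono nhdsWithin_le_nhds
        filter_upwards [self_mem_nhdsWithin, hne0] with s hs hs0
        · simp only [Set.mem_compl_iff, Set.mem_singleton_iff] at hs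
          have hsl1 : s + ((l : ℂ) + 1) ≠ 0 := by
            intro hcon; exact hs (by linear_combination hcon)
          have hG : Complex.Gamma (s + 1) = s * Complex.Gamma s :=
            Complex.Gamma_add_one s hs0
          have h1 : s + 1 + (l : ℂ) ≠ 0 := by
            intro h; exact hsl1 (by linear_combination h)
          simp only [Function.comp, hcsucc]
          rw [hG]
          push_cast
          field_simp
          ring
      have hsum : (∑ j ∈ Finset.Icc 1 (l+1), (1 : ℂ) / j)
          = (∑ j ∈ Finset.Icc 1 l, (1 : ℂ) / j) + 1 / ((l : ℂ) + 1) := by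
        rw [Finset.sum_Icc_succ_top (by omega)]
        push_cast; ring
      have heq : (1 / (-((l : ℂ) + 1))) * (c * ((∑ j ∈ Finset.Icc 1 l, (1 : ℂ) / j) - γ))
            + c / (((l : ℂ) + 1) * (-((l : ℂ) + 1)))
          = ((-1 : ℂ) ^ (l+1) / ((l+1).factorial : ℂ))
            * ((∑ j ∈ Finset.Icc 1 (l+1), (1 : ℂ) / j) - γ) := by
        have hne : (-1 : ℂ) + -(l : ℂ) ≠ 0 := by
          intro h; exact hl1 (by linear_combination -h)
        rw [hcsucc, hsum]
        field_simp [hne]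
        ring
      rw [heq] at key
      have hcast : -((l : ℂ) + 1) = -(((l + 1 : ℕ) : ℂ)) := by push_cast; ring
      rw [hcast] at key
      convert key using 3 <;> push_cast <;> ring

/-- The constant term of the Laurent expansion of `Γ(s)` at `s = -l` equals
`((-1)^l / l!) (H_l - γ)`:
`lim_{s → -l} (Γ(s) - (-1)^l/(l! (s+l))) = ((-1)^l/l!) (∑_{j=1}^{l} 1/j - γ)`. -/
theorem gamma_laurent_constant_term (l : ℕ) :
    Tendsto (fun s : ℂ => Complex.Gamma s - (-1 : ℂ) ^ l / ((l.factorial : ℂ) * (s + l)))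
      (𝓝[≠] (-(l : ℂ)))
      (𝓝 (((-1 : ℂ) ^ l / (l.factorial : ℂ)) *
        ((∑ j ∈ Finset.Icc 1 l, (1 : ℂ) / j) - (Real.eulerMascheroniConstant : ℂ)))) := by
  have := gamma_laurent_aux l
  refine this.congr' ?_
  filter_upwards with s
  rw [div_div]
end

section
/- For every positive integer n, the derivative of the Riemann zeta function at −2n satisfies ζ'(−2n) = (−1)^n · (2n)! · ζ(2n+1) / (2 · (2π)^{2n}); equivalently, 1/ζ'(−2n) = (−1)^n · 2 · (2π)^{2n} / ((2n)! · ζ(2n+1)). -/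
open Real

/-- For every positive integer `n`,
`ζ'(-2n) = (-1)^n (2n)! ζ(2n+1) / (2 (2π)^{2n})`; equivalently,
`1/ζ'(-2n) = (-1)^n 2 (2π)^{2n} / ((2n)! ζ(2n+1))`. -/
theorem deriv_riemannZeta_neg_even (n : ℕ) (hn : 1 ≤ n) :
    deriv riemannZeta (-(2 * n : ℕ))
        = (-1 : ℂ) ^ n * ((2 * n).factorial : ℂ) * riemannZeta (2 * n + 1)
          / (2 * (2 * (π : ℂ)) ^ (2 * n))
    ∧ 1 / deriv riemannZeta (-(2 * n : ℕ))
        = (-1 : ℂ) ^ n * 2 * (2 * (π : ℂ)) ^ (2 * n)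
          / (((2 * n).factorial : ℂ) * riemannZeta (2 * n + 1)) := by
  have hπ : (2 * (π : ℂ)) ≠ 0 := by
    simp [Real.pi_ne_zero]
  set a : ℂ := 2 * (n : ℂ) + 1 with ha
  have hare : a.re = 2 * n + 1 := by simp [ha]
  have hre1 : (1 : ℝ) < a.re := by
    rw [hare]
    have : (1 : ℝ) ≤ (n : ℝ) := by exact_mod_cast hn
    nlinarith
  have hcast : (-(2 * n : ℕ) : ℂ) = 1 - a := by push_cast [ha]; ring
  have ha1 : a ≠ 1 := by
    intro h; rw [h] at hre1; simp at hre1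
  have haneg : ∀ m : ℕ, a ≠ -m := by
    intro m h
    have : a.re = (-(m : ℂ)).re := by rw [h]
    simp only [Complex.neg_re, Complex.natCast_re] at this
    rw [hare] at this
    have hm : (0:ℝ) ≤ (m:ℝ) := by positivity
    have hn' : (0:ℝ) ≤ (n:ℝ) := by positivity
    nlinarith
  -- functional equation in a neighborhood of a
  have hev : (fun s => riemannZeta (1 - s)) =ᶠ[nhds a]
      (fun s => 2 * (2 * (π : ℂ)) ^ (-s) * Complex.Gamma s * Complex.cos (π * s / 2)
        * riemannZeta s) := by
    filter_upwards [Metric.ball_mem_nhds a one_pos] with s hs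
    have hd : ‖s - a‖ < 1 := by
      rw [Metric.mem_ball, Complex.dist_eq] at hs; exact hs
    have hrere : |(s - a).re| ≤ ‖s - a‖ := Complex.abs_re_le_norm _
    have hres : 1 < s.re := by
      have : (s - a).re = s.re - a.re := by simp
      rw [this] at hrere
      have := abs_le.mp (le_of_lt (lt_of_le_of_lt hrere hd))
      rw [hare] at this
      have h1 : (1 : ℝ) ≤ (n : ℝ) := by exact_mod_cast hn
      nlinarith [this.1]
    refine riemannZeta_one_sub (fun m => ?_) (fun h => by rw [h] at hres; simp at hres)
    intro h
    rw [h] at hres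
    simp only [Complex.neg_re, Complex.natCast_re] at hres
    have : (0:ℝ) ≤ (m:ℝ) := by positivity
    linarith
  -- derivative of the left side
  have hL : HasDerivAt (fun s => riemannZeta (1 - s))
      (deriv riemannZeta (1 - a) * (-1)) a :=
    ((differentiableAt_riemannZeta (by
        intro h
        have : (1 - a).re = (1:ℂ).re := by rw [h]
        simp only [Complex.sub_re, Complex.one_re] at this
        rw [hare] at this
        have h1 : (1 : ℝ) ≤ (n : ℝ) := by exact_mod_cast hn
        nlinarith)).hasDerivAt).comp a ((hasDerivAt_id a).const_sub 1)
  -- derivative of the right side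
  have hcpow : HasDerivAt (fun s : ℂ => (2 * (π : ℂ)) ^ (-s))
      ((2 * (π : ℂ)) ^ (-a) * Complex.log (2 * (π : ℂ)) * (-1)) a :=
    ((hasDerivAt_id a).neg).const_cpow (Or.inl hπ)
  have hΓ : HasDerivAt Complex.Gamma (deriv Complex.Gamma a) a :=
    (Complex.differentiableAt_Gamma a haneg).hasDerivAt
  have hζ : HasDerivAt riemannZeta (deriv riemannZeta a) a :=
    (differentiableAt_riemannZeta ha1).hasDerivAt
  have hcos : HasDerivAt (fun s : ℂ => Complex.cos ((π : ℂ) * s / 2))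
      (-Complex.sin ((π : ℂ) * a / 2) * ((π : ℂ) * 1 / 2)) a :=
    (Complex.hasDerivAt_cos _).comp a (((hasDerivAt_id a).const_mul ((π : ℂ))).div_const 2)
  have H := (((hcpow.const_mul (2:ℂ)).mul hΓ).mul hcos).mul hζ
  have e3 := hev.deriv_eq
  have e3' : deriv (fun s => 2 * (2 * (π : ℂ)) ^ (-s) * Complex.Gamma s * Complex.cos (π * s / 2)
      * riemannZeta s) a = _ := H.deriv
  rw [hL.deriv, e3'] at e3
  simp only [Pi.mul_apply] at e3
  -- special values
  have hcos0 : Complex.cos ((π : ℂ) * a / 2) = 0 := by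
    have harg : ((π : ℂ) * a / 2) = (((n : ℝ) * π + π / 2 : ℝ) : ℂ) := by
      push_cast [ha]; ring
    rw [harg, ← Complex.ofReal_cos, Real.cos_add_pi_div_two, Real.sin_nat_mul_pi]
    simp
  have hsin : Complex.sin ((π : ℂ) * a / 2) = (-1) ^ n := by
    have harg : ((π : ℂ) * a / 2) = (((n : ℝ) * π + π / 2 : ℝ) : ℂ) := by
      push_cast [ha]; ring
    rw [harg, ← Complex.ofReal_sin, Real.sin_add_pi_div_two]
    have := Real.cos_nat_mul_pi_sub 0 n
    rw [sub_zero, Real.cos_zero, mul_one] at this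
    rw [this]
    push_cast
    ring
  have hΓval : Complex.Gamma a = ((2 * n).factorial : ℂ) := by
    have : a = ((2 * n : ℕ) : ℂ) + 1 := by push_cast [ha]; ring
    rw [this, Complex.Gamma_nat_eq_factorial]
  have hcpowval : (2 * (π : ℂ)) ^ (-a) = ((2 * (π : ℂ)) ^ (2 * n + 1 : ℕ))⁻¹ := by
    have : -a = -((2 * n + 1 : ℕ) : ℂ) := by push_cast [ha]; ring
    rw [this, Complex.cpow_neg, Complex.cpow_natCast]
  have hζa : riemannZeta a = riemannZeta (2 * (n:ℂ) + 1) := by rw [ha]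
  rw [hcos0, hsin, hΓval, hcpowval] at e3
  have hpow : (2 * (π : ℂ)) ^ (2 * n) ≠ 0 := pow_ne_zero _ hπ
  have hfact : ((2 * n).factorial : ℂ) ≠ 0 := by
    exact_mod_cast Nat.cast_ne_zero.mpr (2 * n).factorial_ne_zero
  have hζne : riemannZeta (2 * (n:ℂ) + 1) ≠ 0 := by
    rw [← ha]; exact riemannZeta_ne_zero_of_one_lt_re hre1
  simp only [mul_zero, zero_mul, zero_add, add_zero, mul_neg_one] at e3
  have key : deriv riemannZeta (-(2 * n : ℕ))
      = (-1 : ℂ) ^ n * ((2 * n).factorial : ℂ) * riemannZeta (2 * n + 1)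
        / (2 * (2 * (π : ℂ)) ^ (2 * n)) := by
    rw [hcast]
    have hd : deriv riemannZeta (1 - a)
        = -(2 * ((2 * (π : ℂ)) ^ (2 * n + 1 : ℕ))⁻¹ * ((2 * n).factorial : ℂ)
            * (-(-1:ℂ)^n * ((π : ℂ) * 1 / 2)) * riemannZeta a) := by
      linear_combination -e3
    rw [hd, hζa, pow_succ]
    have h2πpow : (2 * (π : ℂ)) ^ (2*n) * (2 * (π : ℂ)) ≠ 0 := mul_ne_zero hpow hπ
    field_simp
  refine ⟨key, ?_⟩
  rw [key, one_div_div]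
  have h1 : ((-1:ℂ))^(n*2) = 1 := by
    rw [mul_comm, pow_mul]; norm_num
  have hb : (-1:ℂ)^n * ((2 * n).factorial : ℂ) * riemannZeta (2 * n + 1) ≠ 0 := by
    refine mul_ne_zero (mul_ne_zero ?_ hfact) hζne
    exact pow_ne_zero _ (by norm_num)
  rw [div_eq_div_iff hb (mul_ne_zero hfact hζne)]
  linear_combination (-(2 * (2 * (π:ℂ)) ^ (2*n) * ((2 * n).factorial : ℂ)
    * riemannZeta (2 * (n:ℂ) + 1))) * h1
end
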